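/- arXiv:2508.15032 — 6 statements merged into one kernel-verified Lean document; each statement's English description precedes it below -/
import Mathlib

section
/- Let N₂ : (0, ε₀) → ℕ satisfy lim_{s→0+} s·log N₂(s) = +∞. Then lim_{s→0+} ∑_{p prime, p > N₂(s)} p^{-1-2s} = 0. -/
open Filter

/-- Chebyshev-type bound from `primorial_le_4_pow`. -/
lemma theta_le (n : ℕ) :
    ∑ p ∈ Finset.range (n + 1) with p.Prime, Real.log p ≤ n * Real.log 4 := by
  have h1 : ∑ p ∈ Finset.range (n + 1) with p.Prime, Real.log p
      = Real.log (primorial n) := by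
    rw [primorial, Nat.cast_prod, Real.log_prod]
    intro p hp
    simp only [Finset.mem_filter] at hp
    exact_mod_cast hp.2.pos.ne'
  rw [h1]
  calc Real.log (primorial n) ≤ Real.log ((4 : ℕ) ^ n) := by
        apply Real.log_le_log (by exact_mod_cast primorial_pos n)
        exact_mod_cast primorial_le_4_pow n
    _ = n * Real.log 4 := by
        push_cast
        rw [Real.log_pow]

/-- Key bound: for `0 < s ≤ 1/2` and any finite set of primes,
`∑_p log p · p^{-(1+2s)} ≤ 4 / s`. -/
lemma key_bound {s : ℝ} (hs : 0 < s) (hs2 : s ≤ 1 / 2) (F : Finset ℕ)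
    (hF : ∀ p ∈ F, p.Prime) :
    ∑ p ∈ F, Real.log p * (p : ℝ) ^ (-(1 + 2 * s)) ≤ 4 / s := by
  set r : ℝ := (2 : ℝ) ^ (-(2 * s)) with hr
  have hr0 : 0 < r := Real.rpow_pos_of_pos two_pos _
  have hr1 : r < 1 := by
    apply Real.rpow_lt_one_of_one_lt_of_neg one_lt_two
    linarith
  -- partition F into dyadic blocks by Nat.log 2
  set K := F.sup (Nat.log 2) with hK
  have hmaps : ∀ p ∈ F, Nat.log 2 p ∈ Finset.range (K + 1) := by
    intro p hp
    simp only [Finset.mem_range, Nat.lt_succ_iff]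
    exact Finset.le_sup hp
  rw [← Finset.sum_fiberwise_of_maps_to hmaps]
  have hblock : ∀ k ∈ Finset.range (K + 1),
      ∑ p ∈ F with Nat.log 2 p = k, Real.log p * (p : ℝ) ^ (-(1 + 2 * s))
        ≤ (2 * Real.log 4) * r ^ k := by
    intro k _
    have hterm : ∀ p ∈ F.filter (fun p => Nat.log 2 p = k),
        Real.log p * (p : ℝ) ^ (-(1 + 2 * s))
          ≤ Real.log p * ((2 : ℝ) ^ k) ^ (-(1 + 2 * s)) := by
      intro p hp
      simp only [Finset.mem_filter] at hp
      have hprime := hF p hp.1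
      have hp2 : 2 ≤ p := hprime.two_le
      have hge : (2 : ℕ) ^ k ≤ p := by
        rw [← hp.2]
        exact Nat.pow_log_le_self 2 (by omega)
      have hge' : ((2 : ℝ) ^ k) ≤ (p : ℝ) := by exact_mod_cast hge
      have hlog0 : 0 ≤ Real.log p :=
        Real.log_nonneg (by exact_mod_cast (by omega : (1:ℕ) ≤ p))
      apply mul_le_mul_of_nonneg_left _ hlog0
      exact Real.rpow_le_rpow_of_nonpos (by positivity) hge' (by linarith)
    calc ∑ p ∈ F with Nat.log 2 p = k, Real.log p * (p : ℝ) ^ (-(1 + 2 * s))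
        ≤ ∑ p ∈ F with Nat.log 2 p = k,
            Real.log p * ((2 : ℝ) ^ k) ^ (-(1 + 2 * s)) :=
          Finset.sum_le_sum hterm
      _ = (∑ p ∈ F with Nat.log 2 p = k, Real.log p)
            * ((2 : ℝ) ^ k) ^ (-(1 + 2 * s)) := by
          rw [Finset.sum_mul]
      _ ≤ ((2 ^ (k + 1) - 1 : ℕ) * Real.log 4) * ((2 : ℝ) ^ k) ^ (-(1 + 2 * s)) := by
          apply mul_le_mul_of_nonneg_right _ (Real.rpow_nonneg (by positivity) _)
          have hsub : F.filter (fun p => Nat.log 2 p = k)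
              ⊆ (Finset.range (2 ^ (k + 1) - 1 + 1)).filter Nat.Prime := by
            intro p hp
            simp only [Finset.mem_filter, Finset.mem_range] at hp ⊢
            refine ⟨?_, hF p hp.1⟩
            have hp2 : 2 ≤ p := (hF p hp.1).two_le
            have := Nat.lt_pow_succ_log_self (by norm_num : 1 < 2) p
            rw [hp.2] at this
            omega
          calc ∑ p ∈ F with Nat.log 2 p = k, Real.log p
              ≤ ∑ p ∈ (Finset.range (2 ^ (k + 1) - 1 + 1)).filter Nat.Prime,
                  Real.log p := by
                apply Finset.sum_le_sum_of_subset_of_nonneg hsub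
                intro p hp _
                simp only [Finset.mem_filter] at hp
                exact Real.log_nonneg (by exact_mod_cast hp.2.one_lt.le)
            _ ≤ (2 ^ (k + 1) - 1 : ℕ) * Real.log 4 := theta_le _
      _ ≤ (2 * Real.log 4) * r ^ k := by
          have h4 : (0 : ℝ) < Real.log 4 := Real.log_pos (by norm_num)
          have hcast : ((2 ^ (k + 1) - 1 : ℕ) : ℝ) ≤ 2 * 2 ^ k := by
            have : ((2 ^ (k + 1) - 1 : ℕ) : ℝ) ≤ ((2 ^ (k + 1) : ℕ) : ℝ) := by
              exact_mod_cast Nat.sub_le _ _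
            calc ((2 ^ (k + 1) - 1 : ℕ) : ℝ) ≤ ((2 ^ (k + 1) : ℕ) : ℝ) := this
              _ = 2 * 2 ^ k := by push_cast; ring
          have hpow : ((2 : ℝ) ^ k) ^ (-(1 + 2 * s)) = (2 : ℝ) ^ ((k : ℝ) * (-(1 + 2 * s))) := by
            rw [← Real.rpow_natCast 2 k, ← Real.rpow_mul (by norm_num)]
          have hsplit : (2 : ℝ) ^ ((k : ℝ) * (-(1 + 2 * s)))
              = ((2 : ℝ) ^ (k : ℝ))⁻¹ * r ^ k := by
            rw [hr, ← Real.rpow_natCast ((2:ℝ) ^ (-(2*s))) k, ← Real.rpow_mul (by norm_num),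
              ← Real.rpow_neg_one ((2:ℝ) ^ ((k:ℝ))), ← Real.rpow_mul (by norm_num),
              ← Real.rpow_add two_pos]
            ring_nf
          have h2k : (0:ℝ) < (2:ℝ) ^ (k:ℝ) := Real.rpow_pos_of_pos two_pos _
          have h2k' : (2:ℝ) ^ (k:ℝ) = (2:ℝ) ^ k := Real.rpow_natCast 2 k
          calc ((2 ^ (k + 1) - 1 : ℕ) : ℝ) * Real.log 4 * ((2 : ℝ) ^ k) ^ (-(1 + 2 * s))
              ≤ (2 * 2 ^ k * Real.log 4) * ((2 : ℝ) ^ k) ^ (-(1 + 2 * s)) := by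
                apply mul_le_mul_of_nonneg_right _ (Real.rpow_nonneg (by positivity) _)
                exact mul_le_mul_of_nonneg_right hcast h4.le
            _ = (2 * Real.log 4) * (2 ^ k * (((2 : ℝ) ^ (k:ℝ))⁻¹ * r ^ k)) := by
                rw [hpow, hsplit]; ring
            _ = (2 * Real.log 4) * r ^ k := by
                rw [h2k']
                field_simp
  calc ∑ k ∈ Finset.range (K + 1),
        ∑ p ∈ F with Nat.log 2 p = k, Real.log p * (p : ℝ) ^ (-(1 + 2 * s))
      ≤ ∑ k ∈ Finset.range (K + 1), (2 * Real.log 4) * r ^ k :=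
        Finset.sum_le_sum hblock
    _ = (2 * Real.log 4) * ∑ k ∈ Finset.range (K + 1), r ^ k := by
        rw [Finset.mul_sum]
    _ ≤ (2 * Real.log 4) * (1 - r)⁻¹ := by
        apply mul_le_mul_of_nonneg_left _ (by positivity)
        have hsum : ∑ k ∈ Finset.range (K + 1), r ^ k ≤ ∑' k : ℕ, r ^ k :=
          Summable.sum_le_tsum _ (fun k _ => by positivity)
            (summable_geometric_of_lt_one hr0.le hr1)
        rw [tsum_geometric_of_lt_one hr0.le hr1] at hsum
        exact hsum
    _ ≤ 4 / s := by
        -- 1 - r ≥ s * log 2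
        have hx : r = Real.exp (-(2 * s) * Real.log 2) := by
          rw [hr, Real.rpow_def_of_pos two_pos]; ring_nf
        have hlog2 : (0:ℝ) < Real.log 2 := Real.log_pos one_lt_two
        have hlog2' : Real.log 2 ≤ 1 := by
          have := Real.log_le_sub_one_of_pos (two_pos (α := ℝ))
          linarith
        set x : ℝ := 2 * s * Real.log 2 with hxdef
        have hx0 : 0 < x := by positivity
        have hx1 : x ≤ 1 := by
          have : 2 * s ≤ 1 := by linarith
          nlinarith [hlog2.le]
        have hexp : Real.exp (-x) ≤ 1 / (1 + x) := by
          rw [le_div_iff₀ (by linarith : (0:ℝ) < 1 + x)]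
          have h1 := Real.add_one_le_exp x
          calc Real.exp (-x) * (1 + x) ≤ Real.exp (-x) * Real.exp x := by
                apply mul_le_mul_of_nonneg_left _ (Real.exp_nonneg _)
                linarith
            _ = 1 := by rw [← Real.exp_add]; simp
        have hrle : r ≤ 1 / (1 + x) := by
          rw [hx]
          convert hexp using 2
          ring
        have h1r : s * Real.log 2 ≤ 1 - r := by
          have heq : 1 - 1 / (1 + x) = x / (1 + x) := by
            field_simp
            ring
          have hxx : x / 2 ≤ x / (1 + x) :=
            div_le_div_of_nonneg_left hx0.le (by linarith) (by linarith)
          have hx2 : x / 2 = s * Real.log 2 := by rw [hxdef]; ring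
          linarith [hrle, hxx]
        have hlog4 : Real.log 4 = 2 * Real.log 2 := by
          rw [show (4:ℝ) = 2 ^ 2 by norm_num, Real.log_pow]
          push_cast; ring
        have h1r0 : 0 < 1 - r := by linarith
        rw [hlog4]
        rw [div_eq_mul_inv (4:ℝ) s]
        have hinv : (1 - r)⁻¹ ≤ (s * Real.log 2)⁻¹ := by
          apply inv_anti₀ (by positivity) h1r
        calc 2 * (2 * Real.log 2) * (1 - r)⁻¹
            ≤ 2 * (2 * Real.log 2) * (s * Real.log 2)⁻¹ := by
              apply mul_le_mul_of_nonneg_left hinv (by positivity)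
          _ = 4 * s⁻¹ := by
              field_simp
              ring

/-- Tail bound: for `0 < s ≤ 1/2` with `1 ≤ s * log N`, the tail prime sum is
at most `4 / (s * log N)`. -/
lemma tail_le {s : ℝ} (hs : 0 < s) (hs2 : s ≤ 1 / 2) (N : ℕ)
    (hN : 1 ≤ s * Real.log N) :
    ∑' p : Nat.Primes, (if N < (p : ℕ) then ((p : ℕ) : ℝ) ^ (-(1 + 2 * s)) else 0)
      ≤ 4 / (s * Real.log N) := by
  have hlogN : 0 < Real.log N := by nlinarith
  have hN1 : (1:ℝ) < (N:ℝ) := by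
    by_contra hc
    push_neg at hc
    have := Real.log_nonpos (by positivity) hc
    linarith
  apply tsum_le_of_sum_le'
  · exact le_of_lt (div_pos (by norm_num) (mul_pos hs hlogN))
  intro F
  have step1 : ∀ p : Nat.Primes,
      (if N < (p : ℕ) then ((p : ℕ) : ℝ) ^ (-(1 + 2 * s)) else 0)
        ≤ (Real.log N)⁻¹ * (Real.log (p : ℕ) * ((p : ℕ) : ℝ) ^ (-(1 + 2 * s))) := by
    intro p
    have hp2 : 2 ≤ (p : ℕ) := p.2.two_le
    have hlogp : 0 ≤ Real.log (p : ℕ) :=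
      Real.log_nonneg (by exact_mod_cast Nat.one_le_of_lt hp2)
    have hrpow : (0:ℝ) ≤ ((p : ℕ) : ℝ) ^ (-(1 + 2 * s)) :=
      Real.rpow_nonneg (by positivity) _
    by_cases hNp : N < (p : ℕ)
    · simp only [if_pos hNp]
      have hle : Real.log N ≤ Real.log (p : ℕ) :=
        Real.log_le_log (by linarith) (by exact_mod_cast hNp.le)
      rw [← mul_assoc]
      have h1 : 1 ≤ (Real.log N)⁻¹ * Real.log (p : ℕ) := by
        rw [← div_eq_inv_mul, le_div_iff₀ hlogN]
        linarith
      nlinarith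
    · simp only [if_neg hNp]
      positivity
  calc ∑ p ∈ F, (if N < (p : ℕ) then ((p : ℕ) : ℝ) ^ (-(1 + 2 * s)) else 0)
      ≤ ∑ p ∈ F, (Real.log N)⁻¹
          * (Real.log (p : ℕ) * ((p : ℕ) : ℝ) ^ (-(1 + 2 * s))) :=
        Finset.sum_le_sum fun p _ => step1 p
    _ = (Real.log N)⁻¹
          * ∑ p ∈ F, Real.log (p : ℕ) * ((p : ℕ) : ℝ) ^ (-(1 + 2 * s)) := by
        rw [Finset.mul_sum]
    _ ≤ (Real.log N)⁻¹ * (4 / s) := by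
        apply mul_le_mul_of_nonneg_left _ (by positivity)
        have : ∑ p ∈ F, Real.log (p : ℕ) * ((p : ℕ) : ℝ) ^ (-(1 + 2 * s))
            = ∑ q ∈ F.image (fun p : Nat.Primes => (p : ℕ)),
                Real.log q * (q : ℝ) ^ (-(1 + 2 * s)) := by
          rw [Finset.sum_image]
          intro a _ b _ hab
          exact Subtype.ext hab
        rw [this]
        apply key_bound hs hs2
        intro q hq
        simp only [Finset.mem_image] at hq
        obtain ⟨p, _, rfl⟩ := hq
        exact p.2
    _ = 4 / (s * Real.log N) := by
        field_simp

/-- If `s · log N₂(s) → +∞` as `s → 0+`, then the tail prime sum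
`∑_{p > N₂(s)} p^{-1-2s}` tends to `0` as `s → 0+`. -/
theorem tail_prime_sum_tendsto_zero (N₂ : ℝ → ℕ)
    (h : Tendsto (fun s : ℝ => s * Real.log (N₂ s)) (nhdsWithin 0 (Set.Ioi 0)) atTop) :
    Tendsto (fun s : ℝ =>
        ∑' p : Nat.Primes, if N₂ s < (p : ℕ) then ((p : ℕ) : ℝ) ^ (-(1 + 2 * s)) else 0)
      (nhdsWithin 0 (Set.Ioi 0)) (nhds 0) := by
  have hpos : ∀ᶠ s in nhdsWithin (0:ℝ) (Set.Ioi 0), 0 < s :=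
    eventually_mem_nhdsWithin.mono fun s hs => hs
  have hhalf : ∀ᶠ s in nhdsWithin (0:ℝ) (Set.Ioi 0), s ≤ 1 / 2 := by
    apply eventually_nhdsWithin_of_eventually_nhds
    have : Set.Iio (1/2 : ℝ) ∈ nhds (0:ℝ) := Iio_mem_nhds (by norm_num)
    filter_upwards [this] with s hs
    exact le_of_lt hs
  have hge : ∀ᶠ s in nhdsWithin (0:ℝ) (Set.Ioi 0), 1 ≤ s * Real.log (N₂ s) :=
    h.eventually_ge_atTop 1
  apply squeeze_zero'
  · filter_upwards with s
    exact tsum_nonneg fun p => by positivity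
  · filter_upwards [hpos, hhalf, hge] with s hs hs2 hsN
    exact tail_le hs hs2 (N₂ s) hsN
  · have : Tendsto (fun s : ℝ => 4 / (s * Real.log (N₂ s)))
        (nhdsWithin 0 (Set.Ioi 0)) (nhds 0) := by
      have := h.inv_tendsto_atTop
      have h4 := this.const_mul (4:ℝ)
      simpa [div_eq_mul_inv, mul_zero] using h4
    exact this
end

section
/- Let N₁ : (0, ε₀) → ℕ satisfy lim_{s→0+} N₁(s) = ∞ and lim_{s→0+} s·log N₁(s) = 0. Then ∑_{p prime, p ≤ N₁(s)} p^{-1-2s} ~ log log N₁(s) as s → 0+. -/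
open Filter Finset

namespace MertensAux

lemma log_diff_le {x : ℝ} (hx : 0 < x) : Real.log (x+1) - Real.log x ≤ 1/x := by
  rw [← Real.log_div (by positivity) (ne_of_gt hx)]
  have h1 : Real.log ((x+1) / x) ≤ (x+1)/x - 1 := Real.log_le_sub_one_of_pos (by positivity)
  have : (x+1)/x - 1 = 1/x := by field_simp; ring
  linarith [this ▸ h1]

lemma le_log_diff {x : ℝ} (hx : 0 < x) : 1/(x+1) ≤ Real.log (x+1) - Real.log x := by
  have h1 : Real.log (x / (x+1)) ≤ x/(x+1) - 1 := Real.log_le_sub_one_of_pos (by positivity)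
  have h2 : Real.log (x / (x+1)) = Real.log x - Real.log (x+1) :=
    Real.log_div (ne_of_gt hx) (by positivity)
  have h3 : x/(x+1) - 1 = -(1/(x+1)) := by field_simp; ring
  rw [h2, h3] at h1; linarith

/-- harmonic-type sum -/
noncomputable def H (n : ℕ) : ℝ := ∑ k ∈ range n, (1 : ℝ) / (k + 1)

lemma H_le (n : ℕ) (hn : 1 ≤ n) : H n ≤ Real.log n + 1 := by
  induction n, hn using Nat.le_induction with
  | base => simp [H]
  | succ n hn ih =>
    have h0 : (0:ℝ) < n := by exact_mod_cast hn
    have key := le_log_diff h0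
    have : H (n+1) = H n + 1/((n:ℝ)+1) := by simp [H, sum_range_succ]
    push_cast
    have h2 : (1:ℝ)/((n:ℝ)+1) ≤ 1/(n:ℝ) := by
      apply one_div_le_one_div_of_le h0; linarith
    rw [this]; push_cast at ih ⊢; linarith

lemma le_H (n : ℕ) : Real.log (n+1) ≤ H n := by
  induction n with
  | zero => simp [H]
  | succ n ih =>
    have h0 : (0:ℝ) < n + 1 := by positivity
    have key := log_diff_le h0
    have hh : H (n+1) = H n + 1/((n:ℝ)+1) := by simp [H, sum_range_succ]
    rw [hh]; push_cast at key ih ⊢; linarith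

end MertensAux

namespace MertensAux
open Finset

lemma one_div_split (x : ℝ) (hx : 0 < x) : 1/(x*(x+1)) = 1/x - 1/(x+1) := by
  field_simp
  ring

lemma telescope (n : ℕ) : ∑ k ∈ range n, 1/(((k:ℝ)+1)*((k:ℝ)+2)) ≤ 1 := by
  have key := Finset.sum_range_sub' (fun m : ℕ => 1/((m:ℝ)+1)) n
  have heq : ∑ k ∈ range n, 1/(((k:ℝ)+1)*((k:ℝ)+2))
      = ∑ k ∈ range n, ((fun m : ℕ => 1/((m:ℝ)+1)) k - (fun m : ℕ => 1/((m:ℝ)+1)) (k+1)) := by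
    apply sum_congr rfl; intro k _
    show 1/(((k:ℝ)+1)*((k:ℝ)+2)) = 1/((k:ℝ)+1) - 1/(((k+1:ℕ):ℝ)+1)
    push_cast
    rw [show ((k:ℝ)+2) = ((k:ℝ)+1)+1 by ring]
    exact one_div_split _ (by positivity)
  rw [heq, key]
  have h1 : (0:ℝ) ≤ 1/((n:ℝ)+1) := by positivity
  push_cast
  norm_num
  linarith

lemma zeta32_step (k : ℕ) :
    1/(((k:ℝ)+2) * Real.sqrt ((k:ℝ)+2)) ≤ 2/Real.sqrt ((k:ℝ)+1) - 2/Real.sqrt ((k:ℝ)+2) := by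
  set a := Real.sqrt ((k:ℝ)+1) with ha_def
  set b := Real.sqrt ((k:ℝ)+2) with hb_def
  have ha : 0 < a := Real.sqrt_pos.mpr (by positivity)
  have hb : 0 < b := Real.sqrt_pos.mpr (by positivity)
  have ha2 : a^2 = (k:ℝ)+1 := Real.sq_sqrt (by positivity)
  have hb2 : b^2 = (k:ℝ)+2 := Real.sq_sqrt (by positivity)
  have hab : a ≤ b := Real.sqrt_le_sqrt (by linarith)
  have h3 : (b-a)*(b+a) = 1 := by nlinarith
  have key : a*b*(a+b) ≤ 2*b^3 := by nlinarith
  have h4 : a*b ≤ (b-a)*(2*b^3) := by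
    have hba : 0 ≤ b - a := by linarith
    calc a*b = (b-a)*(a*b*(a+b)) := by linear_combination (-(a*b))*h3
      _ ≤ (b-a)*(2*b^3) := mul_le_mul_of_nonneg_left key hba
  have hrw : ((k:ℝ)+2) = b^2 := hb2.symm
  rw [hrw, div_sub_div _ _ (ne_of_gt ha) (ne_of_gt hb),
    div_le_div_iff₀ (by positivity) (by positivity)]
  nlinarith [h4]

lemma zeta32 (n : ℕ) : ∑ k ∈ range n, 1/(((k:ℝ)+1) * Real.sqrt ((k:ℝ)+1)) ≤ 3 := by
  cases n with
  | zero => simp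
  | succ m =>
    rw [Finset.sum_range_succ']
    have hsum : ∑ k ∈ range m, 1/(((((k+1:ℕ)):ℝ)+1) * Real.sqrt (((((k+1:ℕ)):ℝ))+1)) ≤ 2 := by
      set g : ℕ → ℝ := fun j => 2 / Real.sqrt ((j:ℝ)+1) with hg
      calc ∑ k ∈ range m, 1/(((((k+1:ℕ)):ℝ)+1) * Real.sqrt (((((k+1:ℕ)):ℝ))+1))
          ≤ ∑ k ∈ range m, (g k - g (k+1)) := by
            apply sum_le_sum; intro k _
            have := zeta32_step k
            simp only [hg]
            push_cast
            rw [show ((k:ℝ)+1+1) = (k:ℝ)+2 by ring]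
            exact this
        _ = g 0 - g m := Finset.sum_range_sub' g m
        _ ≤ 2 := by
            have h1 : (0:ℝ) ≤ g m := by positivity
            have h2 : g 0 = 2 := by simp [hg]
            linarith
    have h0 : 1/(((((0:ℕ)):ℝ)+1) * Real.sqrt (((((0:ℕ)):ℝ))+1)) ≤ 1 := by
      simp
    linarith [hsum, h0]

lemma abel (t b : ℕ → ℝ) (K : ℕ) :
    ∑ k ∈ range (K+1), (t (k+1) - t k) * b k
      = t (K+1) * b K - t 0 * b 0 - ∑ k ∈ range K, t (k+1) * (b (k+1) - b k) := by
  induction K with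
  | zero => simp; ring
  | succ K ih => rw [sum_range_succ, ih, sum_range_succ]; ring

end MertensAux

namespace MertensAux
open Finset Nat

noncomputable def Mp (N : ℕ) : ℝ := ∑ p ∈ N.primesBelow, (1:ℝ)/p
noncomputable def Tp (N : ℕ) : ℝ := ∑ p ∈ N.primesBelow, Real.log p / p

lemma Mp_nonneg (N : ℕ) : 0 ≤ Mp N := by
  apply Finset.sum_nonneg; intro p hp; positivity

lemma Tp_nonneg (N : ℕ) : 0 ≤ Tp N := by
  apply Finset.sum_nonneg; intro p hp
  have := Real.log_natCast_nonneg p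
  positivity

lemma Mp_mono {M N : ℕ} (h : M ≤ N) : Mp M ≤ Mp N := by
  apply Finset.sum_le_sum_of_subset_of_nonneg
  · intro p hp
    rw [Nat.mem_primesBelow] at hp ⊢
    exact ⟨lt_of_lt_of_le hp.1 h, hp.2⟩
  · intro p _ _; positivity

lemma theta_le (n : ℕ) : ∑ p ∈ (n+1).primesBelow, Real.log p ≤ (n:ℝ) * Real.log 4 := by
  have h1 : ∀ p ∈ (n+1).primesBelow, ((p:ℝ)) ≠ 0 := by
    intro p hp
    have := (Nat.prime_of_mem_primesBelow hp).pos
    positivity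
  rw [← Real.log_prod h1]
  have h2 : ∏ p ∈ (n+1).primesBelow, (p:ℝ) = ((primorial n : ℕ) : ℝ) := by
    rw [primorial, Nat.primesBelow, Nat.cast_prod]
  rw [h2]
  have h3 : ((primorial n : ℕ) : ℝ) ≤ ((4^n : ℕ) : ℝ) := by
    exact_mod_cast primorial_le_4_pow n
  calc Real.log ((primorial n : ℕ) : ℝ) ≤ Real.log (((4:ℕ):ℝ)^n) := by
        apply Real.log_le_log (by exact_mod_cast primorial_pos n)
        push_cast at h3 ⊢
        exact h3
    _ = (n:ℝ) * Real.log 4 := by rw [Real.log_pow]; push_cast; ring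

lemma logfact_sum (n : ℕ) : Real.log (n ! : ℝ) = ∑ k ∈ range n, Real.log ((k:ℝ)+1) := by
  induction n with
  | zero => simp
  | succ n ih =>
    rw [sum_range_succ, ← ih, Nat.factorial_succ]
    push_cast
    rw [Real.log_mul (by positivity) (by exact_mod_cast Nat.factorial_pos n |>.ne')]
    ring

lemma LF_le (n : ℕ) : Real.log (n ! : ℝ) ≤ (n:ℝ) * Real.log n := by
  rw [logfact_sum]
  calc ∑ k ∈ range n, Real.log ((k:ℝ)+1) ≤ ∑ k ∈ range n, Real.log n := by
        apply Finset.sum_le_sum; intro k hk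
        apply Real.log_le_log (by positivity)
        have : k + 1 ≤ n := Finset.mem_range.mp hk
        exact_mod_cast this
    _ = (n:ℝ) * Real.log n := by rw [Finset.sum_const, card_range, nsmul_eq_mul]

lemma le_LF (n : ℕ) (hn : 1 ≤ n) : (n:ℝ) * Real.log n - n + 1 ≤ Real.log (n ! : ℝ) := by
  induction n, hn using Nat.le_induction with
  | base => simp
  | succ n hn ih =>
    have hn0 : (0:ℝ) < n := by exact_mod_cast hn
    have hd := log_diff_le hn0
    have hfact : Real.log ((n+1)! : ℝ) = Real.log (n ! : ℝ) + Real.log ((n:ℝ)+1) := by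
      rw [Nat.factorial_succ]
      push_cast
      rw [Real.log_mul (by positivity) (by exact_mod_cast Nat.factorial_pos n |>.ne')]
      ring
    have hkey : (n:ℝ) * (Real.log ((n:ℝ)+1) - Real.log n) ≤ 1 := by
      calc (n:ℝ) * (Real.log ((n:ℝ)+1) - Real.log n) ≤ (n:ℝ) * (1/(n:ℝ)) :=
            mul_le_mul_of_nonneg_left hd (le_of_lt hn0)
        _ = 1 := by field_simp
    rw [hfact]
    push_cast
    nlinarith [ih]

end MertensAux

namespace MertensAux
open Finset Nat

lemma logfact_eq (n : ℕ) :
    Real.log (n ! : ℝ) = ∑ p ∈ (n+1).primesBelow, ((n !).factorization p : ℝ) * Real.log p := by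
  rw [Real.log_nat_eq_sum_factorization, Finsupp.sum]
  apply Finset.sum_subset
  · intro p hp
    rw [Nat.support_factorization, Nat.mem_primeFactors] at hp
    obtain ⟨hpp, hpd, _⟩ := hp
    rw [Nat.mem_primesBelow]
    exact ⟨Nat.lt_succ_of_le ((Nat.Prime.dvd_factorial hpp).mp hpd), hpp⟩
  · intro p _ hp
    rw [Finsupp.notMem_support_iff] at hp
    simp [hp]

lemma legendre_low {p n : ℕ} (hp : p.Prime) (hpn : p ≤ n) :
    n / p ≤ (n !).factorization p := by
  haveI := Fact.mk hp
  rw [Nat.factorization_def _ hp, padicValNat_factorial (Nat.lt_succ_self (Nat.log p n))]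
  have h1 : (1:ℕ) ∈ Finset.Ico 1 (Nat.log p n + 1) := by
    rw [Finset.mem_Ico]
    refine ⟨le_refl _, ?_⟩
    have : 0 < Nat.log p n := Nat.log_pos hp.one_lt hpn
    omega
  calc n / p = n / p ^ 1 := by rw [pow_one]
    _ ≤ ∑ i ∈ Finset.Ico 1 (Nat.log p n + 1), n / p ^ i :=
        Finset.single_le_sum (f := fun i => n / p ^ i) (fun i _ => Nat.zero_le _) h1

lemma legendre_high {p n : ℕ} (hp : p.Prime) :
    (n !).factorization p ≤ n / (p - 1) := by
  haveI := Fact.mk hp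
  rw [Nat.factorization_def _ hp, padicValNat_factorial (Nat.lt_succ_self (Nat.log p n))]
  exact Nat.geom_sum_Ico_le hp.two_le n _

lemma C0_term {p : ℕ} (hp : p.Prime) :
    Real.log p / ((p:ℝ) * ((p:ℝ)-1)) ≤ 2 * (1/((((p-2:ℕ)):ℝ)+1) / Real.sqrt ((((p-2:ℕ)):ℝ)+1)) := by
  have h2 : 2 ≤ p := hp.two_le
  have hc : (((p-2:ℕ)):ℝ) + 1 = (p:ℝ) - 1 := by
    have : ((p-2:ℕ):ℝ) = (p:ℝ) - 2 := by
      push_cast [Nat.cast_sub h2]; ring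
    rw [this]; ring
  rw [hc]
  set x := (p:ℝ) with hx
  have hx2 : (2:ℝ) ≤ x := by rw [hx]; exact_mod_cast h2
  set a := Real.sqrt x with ha
  set b := Real.sqrt (x-1) with hb
  have ha0 : 0 < a := Real.sqrt_pos.mpr (by linarith)
  have hb0 : 0 < b := Real.sqrt_pos.mpr (by linarith)
  have ha2 : a^2 = x := Real.sq_sqrt (by linarith)
  have hb2 : b^2 = x-1 := Real.sq_sqrt (by linarith)
  have hba : b ≤ a := Real.sqrt_le_sqrt (by linarith)
  have hlog : Real.log x ≤ 2*a - 2 := by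
    have h1 : Real.log a ≤ a - 1 := Real.log_le_sub_one_of_pos ha0
    have h2' : Real.log a = Real.log x / 2 := Real.log_sqrt (by linarith)
    linarith
  have hx0 : (0:ℝ) < x * (x-1) := by nlinarith
  rw [div_le_iff₀ hx0]
  have key : (2*a - 2) ≥ Real.log x := hlog
  have hxm1 : (0:ℝ) < x - 1 := by linarith
  have expand : 2 * (1/(x-1) / b) * (x * (x-1)) = 2*x/b := by
    field_simp
  rw [expand]
  have h5 : (2*a-2) * b ≤ 2*x := by nlinarith
  calc Real.log x ≤ 2*a - 2 := hlog
    _ = (2*a-2)*b/b := by field_simp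
    _ ≤ 2*x/b := (div_le_div_iff_of_pos_right hb0).mpr h5

end MertensAux

namespace MertensAux
open Finset Nat

lemma C0_le (m : ℕ) : ∑ p ∈ m.primesBelow, Real.log p / ((p:ℝ) * ((p:ℝ)-1)) ≤ 6 := by
  have step1 : ∑ p ∈ m.primesBelow, Real.log p / ((p:ℝ) * ((p:ℝ)-1))
      ≤ ∑ p ∈ m.primesBelow, 2 * (1/((((p-2:ℕ)):ℝ)+1) / Real.sqrt ((((p-2:ℕ)):ℝ)+1)) := by
    apply Finset.sum_le_sum
    intro p hp
    exact C0_term (Nat.prime_of_mem_primesBelow hp)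
  have step2 : ∑ p ∈ m.primesBelow, 2 * (1/((((p-2:ℕ)):ℝ)+1) / Real.sqrt ((((p-2:ℕ)):ℝ)+1))
      = ∑ j ∈ m.primesBelow.image (fun p => p - 2), 2 * (1/(((j:ℕ):ℝ)+1) / Real.sqrt (((j:ℕ):ℝ)+1)) := by
    rw [Finset.sum_image]
    intro p hp q hq hpq
    have h2p := (Nat.prime_of_mem_primesBelow hp).two_le
    have h2q := (Nat.prime_of_mem_primesBelow hq).two_le
    simp only at hpq
    omega
  have step3 : ∑ j ∈ m.primesBelow.image (fun p => p - 2), 2 * (1/(((j:ℕ):ℝ)+1) / Real.sqrt (((j:ℕ):ℝ)+1))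
      ≤ ∑ j ∈ range m, 2 * (1/(((j:ℕ):ℝ)+1) / Real.sqrt (((j:ℕ):ℝ)+1)) := by
    apply Finset.sum_le_sum_of_subset_of_nonneg
    · intro j hj
      rw [Finset.mem_image] at hj
      obtain ⟨p, hp, rfl⟩ := hj
      have := Nat.lt_of_mem_primesBelow hp
      rw [Finset.mem_range]
      omega
    · intro j _ _; positivity
  have step4 : ∑ j ∈ range m, 2 * (1/(((j:ℕ):ℝ)+1) / Real.sqrt (((j:ℕ):ℝ)+1)) ≤ 6 := by
    have h := zeta32 m
    have heq : ∑ j ∈ range m, 2 * (1/(((j:ℕ):ℝ)+1) / Real.sqrt (((j:ℕ):ℝ)+1))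
        = 2 * ∑ j ∈ range m, 1/(((j:ℝ)+1) * Real.sqrt ((j:ℝ)+1)) := by
      rw [Finset.mul_sum]
      apply Finset.sum_congr rfl
      intro j _
      rw [div_div, one_div]
    rw [heq]
    linarith
  linarith

lemma cast_le_div_sub_one {n p : ℕ} (hp : 2 ≤ p) : ((n / (p-1) : ℕ) : ℝ) ≤ (n:ℝ) / ((p:ℝ) - 1) := by
  have h1 : ((n / (p-1) : ℕ) : ℝ) ≤ (n:ℝ) / (((p-1:ℕ)):ℝ) := Nat.cast_div_le
  have h2 : (((p-1:ℕ)):ℝ) = (p:ℝ) - 1 := by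
    push_cast [Nat.cast_sub (by omega : 1 ≤ p)]; ring
  rw [h2] at h1; exact h1

lemma div_sub_one_le_cast_div {n p : ℕ} (hp : 0 < p) : (n:ℝ)/(p:ℝ) - 1 ≤ ((n / p : ℕ) : ℝ) := by
  have hmod := Nat.div_add_mod n p
  have hlt : n % p < p := Nat.mod_lt _ hp
  have hp0 : (0:ℝ) < p := by exact_mod_cast hp
  rw [sub_le_iff_le_add, div_le_iff₀ hp0]
  have : (n:ℝ) = (p:ℝ) * ((n/p : ℕ):ℝ) + ((n % p : ℕ):ℝ) := by exact_mod_cast hmod.symm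
  have hltr : ((n % p : ℕ):ℝ) < (p:ℝ) := by exact_mod_cast hlt
  nlinarith

lemma Tp_le (n : ℕ) (hn : 1 ≤ n) : Tp (n+1) ≤ Real.log n + Real.log 4 := by
  have hn0 : (0:ℝ) < n := by exact_mod_cast hn
  have h1 : ∑ p ∈ (n+1).primesBelow, ((n:ℝ)/(p:ℝ) - 1) * Real.log p ≤ Real.log (n ! : ℝ) := by
    rw [logfact_eq]
    apply Finset.sum_le_sum
    intro p hp
    have hpp := Nat.prime_of_mem_primesBelow hp
    have hple : p ≤ n := by have := Nat.lt_of_mem_primesBelow hp; omega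
    have hfl : ((n / p : ℕ):ℝ) ≤ ((n !).factorization p : ℝ) := by
      exact_mod_cast legendre_low hpp hple
    have hq := div_sub_one_le_cast_div (n := n) hpp.pos
    exact mul_le_mul_of_nonneg_right (le_trans hq hfl) (Real.log_natCast_nonneg p)
  have h2 : ∑ p ∈ (n+1).primesBelow, ((n:ℝ)/(p:ℝ) - 1) * Real.log p
      = (n:ℝ) * Tp (n+1) - ∑ p ∈ (n+1).primesBelow, Real.log p := by
    rw [Tp, Finset.mul_sum, ← Finset.sum_sub_distrib]
    apply Finset.sum_congr rfl
    intro p _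
    ring
  have h3 := theta_le n
  have h4 := LF_le n
  have key : (n:ℝ) * Tp (n+1) ≤ (n:ℝ) * (Real.log n + Real.log 4) := by
    rw [h2] at h1
    rw [mul_add]
    linarith
  exact le_of_mul_le_mul_left key hn0

lemma le_Tp (n : ℕ) (hn : 1 ≤ n) : Real.log n - 7 ≤ Tp (n+1) := by
  have hn0 : (0:ℝ) < n := by exact_mod_cast hn
  have h1 : Real.log (n ! : ℝ) ≤ ∑ p ∈ (n+1).primesBelow, ((n:ℝ)/((p:ℝ)-1)) * Real.log p := by
    rw [logfact_eq]
    apply Finset.sum_le_sum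
    intro p hp
    have hpp := Nat.prime_of_mem_primesBelow hp
    have hfh : ((n !).factorization p : ℝ) ≤ ((n / (p-1) : ℕ) : ℝ) := by
      exact_mod_cast legendre_high hpp
    exact mul_le_mul_of_nonneg_right (le_trans hfh (cast_le_div_sub_one hpp.two_le))
      (Real.log_natCast_nonneg p)
  have h2 : ∑ p ∈ (n+1).primesBelow, ((n:ℝ)/((p:ℝ)-1)) * Real.log p
      = (n:ℝ) * Tp (n+1) + (n:ℝ) * ∑ p ∈ (n+1).primesBelow, Real.log p / ((p:ℝ) * ((p:ℝ)-1)) := by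
    rw [Tp, Finset.mul_sum, Finset.mul_sum, ← Finset.sum_add_distrib]
    apply Finset.sum_congr rfl
    intro p hp
    have hpp := Nat.prime_of_mem_primesBelow hp
    have hp1 : (1:ℝ) < (p:ℝ) := by exact_mod_cast hpp.one_lt
    have hp0 : (p:ℝ) ≠ 0 := by linarith
    have hpm : (p:ℝ) - 1 ≠ 0 := by linarith
    field_simp
    ring
  have h3 := C0_le (n+1)
  have h4 := le_LF n hn
  have key : (n:ℝ) * (Real.log n - 7) ≤ (n:ℝ) * Tp (n+1) := by
    rw [h2] at h1
    have h5 : (n:ℝ) * ∑ p ∈ (n+1).primesBelow, Real.log p / ((p:ℝ) * ((p:ℝ)-1)) ≤ (n:ℝ) * 6 :=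
      mul_le_mul_of_nonneg_left h3 (le_of_lt hn0)
    nlinarith
  exact le_of_mul_le_mul_left key hn0

end MertensAux

namespace MertensAux
open Finset Nat

lemma log2_ge : (1:ℝ)/2 ≤ Real.log 2 := by
  have := Real.log_two_gt_d9; linarith

lemma log2_le : Real.log 2 ≤ 1 := by
  have := Real.log_two_lt_d9; linarith

lemma log_two_pow (k : ℕ) : Real.log ((2:ℝ)^k) = (k:ℝ) * Real.log 2 := by
  rw [Real.log_pow]

lemma two_pow_cast (k : ℕ) : ((2^k : ℕ) : ℝ) = (2:ℝ)^k := by push_cast; ring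

lemma t_ub (k : ℕ) : Tp (2^(k+1)) ≤ ((k:ℝ)+1) * Real.log 2 + 2 := by
  have h1 : (1:ℕ) ≤ 2^(k+1) - 1 := by
    have : 2 ≤ 2^(k+1) := by
      calc 2 = 2^1 := by norm_num
        _ ≤ 2^(k+1) := Nat.pow_le_pow_right (by norm_num) (by omega)
    omega
  have h2 : 2^(k+1) - 1 + 1 = 2^(k+1) := by omega
  have h3 := Tp_le (2^(k+1) - 1) h1
  rw [h2] at h3
  have h4 : Real.log ((2^(k+1) - 1 : ℕ) : ℝ) ≤ ((k:ℝ)+1) * Real.log 2 := by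
    have hstep : ((2^(k+1) - 1 : ℕ) : ℝ) ≤ (2:ℝ)^(k+1) := by
      rw [← two_pow_cast]
      exact_mod_cast Nat.sub_le _ _
    calc Real.log ((2^(k+1) - 1 : ℕ) : ℝ) ≤ Real.log ((2:ℝ)^(k+1)) :=
          Real.log_le_log (by exact_mod_cast h1) hstep
      _ = ((k:ℝ)+1) * Real.log 2 := by rw [log_two_pow]; push_cast; ring
  have h5 : Real.log 4 ≤ 2 := by
    have h44 : (4:ℝ) = 2^(2:ℕ) := by norm_num
    rw [h44, log_two_pow]
    have := log2_le
    norm_num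
    linarith
  linarith

lemma t_lb (k : ℕ) : (k:ℝ) * Real.log 2 - 7 ≤ Tp (2^(k+1)) := by
  have h1 : (1:ℕ) ≤ 2^(k+1) - 1 := by
    have : 2 ≤ 2^(k+1) := by
      calc 2 = 2^1 := by norm_num
        _ ≤ 2^(k+1) := Nat.pow_le_pow_right (by norm_num) (by omega)
    omega
  have h2 : 2^(k+1) - 1 + 1 = 2^(k+1) := by omega
  have h3 := le_Tp (2^(k+1) - 1) h1
  rw [h2] at h3
  have h4 : (k:ℝ) * Real.log 2 ≤ Real.log ((2^(k+1) - 1 : ℕ) : ℝ) := by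
    have hle : (2^k : ℕ) ≤ 2^(k+1) - 1 := by
      have : 2^k + 2^k = 2^(k+1) := by ring
      have h1' : 1 ≤ 2^k := Nat.one_le_two_pow
      omega
    rw [← log_two_pow, ← two_pow_cast]
    apply Real.log_le_log (by positivity)
    exact_mod_cast hle
  linarith

def blk (k : ℕ) : Finset ℕ := (2^(k+2)).primesBelow \ (2^(k+1)).primesBelow

lemma sdiff_mem {k p : ℕ} (hp : p ∈ blk k) :
    p.Prime ∧ 2^(k+1) ≤ p ∧ p < 2^(k+2) := by
  rw [blk, Finset.mem_sdiff, Nat.mem_primesBelow, Nat.mem_primesBelow] at hp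
  obtain ⟨⟨hlt, hpp⟩, hnot⟩ := hp
  refine ⟨hpp, ?_, hlt⟩
  by_contra h
  exact hnot ⟨by omega, hpp⟩

lemma primesBelow_subset {a b : ℕ} (h : a ≤ b) : a.primesBelow ⊆ b.primesBelow := by
  intro p hp
  rw [Nat.mem_primesBelow] at hp ⊢
  exact ⟨lt_of_lt_of_le hp.1 h, hp.2⟩

lemma pow_subset (k : ℕ) : (2^(k+1)).primesBelow ⊆ (2^(k+2)).primesBelow :=
  primesBelow_subset (Nat.pow_le_pow_right (by norm_num) (by omega))

lemma Mp_diff (k : ℕ) : Mp (2^(k+2)) - Mp (2^(k+1))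
    = ∑ p ∈ blk k, (1:ℝ)/(p:ℕ) := by
  rw [Mp, Mp, blk, Finset.sum_sdiff_eq_sub (pow_subset k)]

lemma Tp_diff (k : ℕ) : Tp (2^(k+2)) - Tp (2^(k+1))
    = ∑ p ∈ blk k, Real.log (p:ℕ) / (p:ℕ) := by
  rw [Tp, Tp, blk, Finset.sum_sdiff_eq_sub (pow_subset k)]

lemma log_p_bounds {k p : ℕ} (hpp : p.Prime) (hlo : 2^(k+1) ≤ p) (hhi : p < 2^(k+2)) :
    ((k:ℝ)+1) * Real.log 2 ≤ Real.log p ∧ Real.log p ≤ ((k:ℝ)+2) * Real.log 2 := by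
  have hp0 : (0:ℝ) < p := by exact_mod_cast hpp.pos
  constructor
  · have hlo' : (2:ℝ)^(k+1) ≤ (p:ℝ) := by
      rw [← two_pow_cast]; exact_mod_cast hlo
    have := Real.log_le_log (by positivity : (0:ℝ) < (2:ℝ)^(k+1)) hlo'
    rw [log_two_pow] at this
    push_cast at this ⊢
    linarith
  · have hhi' : (p:ℝ) ≤ (2:ℝ)^(k+2) := by
      rw [← two_pow_cast]; exact_mod_cast le_of_lt hhi
    have := Real.log_le_log hp0 hhi'
    rw [log_two_pow] at this
    push_cast at this ⊢
    linarith

lemma block_ub (k : ℕ) : Mp (2^(k+2)) - Mp (2^(k+1))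
    ≤ (Tp (2^(k+2)) - Tp (2^(k+1))) * (1/(((k:ℝ)+1) * Real.log 2)) := by
  rw [Mp_diff, Tp_diff, Finset.sum_mul]
  apply Finset.sum_le_sum
  intro p hp
  obtain ⟨hpp, hlo, hhi⟩ := sdiff_mem hp
  obtain ⟨hL, _⟩ := log_p_bounds hpp hlo hhi
  have hl2 := log2_ge
  have hc : (0:ℝ) < ((k:ℝ)+1) * Real.log 2 := by positivity
  have hp0 : (0:ℝ) < (p:ℝ) := by exact_mod_cast hpp.pos
  rw [div_mul_eq_mul_div, div_le_div_iff₀ hp0 hp0]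
  have hge1 : 1 ≤ Real.log p * (1/(((k:ℝ)+1) * Real.log 2)) := by
    rw [mul_one_div, le_div_iff₀ hc]
    linarith
  nlinarith

lemma block_lb (k : ℕ) : (Tp (2^(k+2)) - Tp (2^(k+1))) * (1/(((k:ℝ)+2) * Real.log 2))
    ≤ Mp (2^(k+2)) - Mp (2^(k+1)) := by
  rw [Mp_diff, Tp_diff, Finset.sum_mul]
  apply Finset.sum_le_sum
  intro p hp
  obtain ⟨hpp, hlo, hhi⟩ := sdiff_mem hp
  obtain ⟨_, hU⟩ := log_p_bounds hpp hlo hhi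
  have hl2 := log2_ge
  have hc : (0:ℝ) < ((k:ℝ)+2) * Real.log 2 := by positivity
  have hp0 : (0:ℝ) < (p:ℝ) := by exact_mod_cast hpp.pos
  rw [div_mul_eq_mul_div, div_le_div_iff₀ hp0 hp0]
  have hle1 : Real.log p * (1/(((k:ℝ)+2) * Real.log 2)) ≤ 1 := by
    rw [mul_one_div, div_le_iff₀ hc]
    linarith
  nlinarith

lemma Mp_two : Mp 2 = 0 := by
  have : Nat.primesBelow 2 = ∅ := by decide
  rw [Mp, this, Finset.sum_empty]

lemma Mp_telescope (K : ℕ) : Mp (2^(K+1)) = ∑ k ∈ range K, (Mp (2^(k+2)) - Mp (2^(k+1))) := by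
  have h := Finset.sum_range_sub (fun k => Mp (2^(k+1))) K
  have h0 : Mp (2^(0+1)) = 0 := by norm_num [Mp_two]
  have hcongr : ∑ k ∈ range K, (Mp (2^(k+2)) - Mp (2^(k+1)))
      = ∑ k ∈ range K, (Mp (2^(k+1+1)) - Mp (2^(k+1))) :=
    Finset.sum_congr rfl (fun k _ => by norm_num)
  rw [hcongr, h, h0, sub_zero]

end MertensAux

namespace MertensAux
open Finset Nat

lemma sum_shift3 (K : ℕ) : ∑ k ∈ range K, 1/((k:ℝ)+3) = H (K+2) - 3/2 := by
  induction K with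
  | zero =>
    simp [H, Finset.sum_range_succ]
    norm_num
  | succ K ih =>
    rw [Finset.sum_range_succ, ih]
    have : H (K+1+2) = H (K+2) + 1/((K:ℝ)+2+1) := by
      rw [show K+1+2 = (K+2)+1 by omega, H, H, Finset.sum_range_succ]
      push_cast
      ring
    rw [this]
    push_cast
    ring

lemma telescope23 (K : ℕ) : ∑ k ∈ range K, 1/(((k:ℝ)+2)*((k:ℝ)+3)) ≤ 1 := by
  refine le_trans (Finset.sum_le_sum ?_) (telescope K)
  intro k _
  apply one_div_le_one_div_of_le (by positivity)
  nlinarith [Nat.cast_nonneg (α := ℝ) k]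

lemma H_le' (K : ℕ) : H K ≤ Real.log ((K:ℝ)+1) + 1 := by
  have h1 := H_le (K+1) (by omega)
  have h2 : H (K+1) = H K + 1/((K:ℝ)+1) := by
    rw [H, H, Finset.sum_range_succ]
  have h3 : (0:ℝ) < 1/((K:ℝ)+1) := by positivity
  push_cast at h1
  linarith

lemma Mp_ub (K : ℕ) : Mp (2^(K+2)) ≤ Real.log ((K:ℝ)+1) + 11 := by
  have hL := log2_ge
  have hU := log2_le
  have hL0 : (0:ℝ) < Real.log 2 := by linarith
  set t : ℕ → ℝ := fun k => Tp (2^(k+1)) with ht_def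
  set b : ℕ → ℝ := fun k => 1/(((k:ℝ)+1) * Real.log 2) with hb_def
  have habel := abel t b K
  have ht0 : t 0 = 0 := by
    show Tp (2^(0+1)) = 0
    norm_num [Tp]
  have h1 : Mp (2^(K+2)) = ∑ k ∈ range (K+1), (Mp (2^(k+2)) - Mp (2^(k+1))) :=
    Mp_telescope (K+1)
  have h2 : Mp (2^(K+2)) ≤ ∑ k ∈ range (K+1), (t (k+1) - t k) * b k := by
    rw [h1]
    exact Finset.sum_le_sum (fun k _ => block_ub k)
  rw [habel, ht0] at h2
  -- first piece
  have hbK : (0:ℝ) < ((K:ℝ)+1) * Real.log 2 := by positivity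
  have hA : t (K+1) * b K ≤ 6 := by
    have ht1 : t (K+1) ≤ (((K:ℝ)+1)+1) * Real.log 2 + 2 := by
      have := t_ub (K+1)
      push_cast at this ⊢
      exact this
    have hb1 : b K = 1/(((K:ℝ)+1) * Real.log 2) := rfl
    have hkey : (((K:ℝ)+1)+1) * Real.log 2 + 2 ≤ 6 * (((K:ℝ)+1) * Real.log 2) := by
      have hK0 : (0:ℝ) ≤ (K:ℝ) := Nat.cast_nonneg K
      nlinarith
    calc t (K+1) * b K ≤ ((((K:ℝ)+1)+1) * Real.log 2 + 2) * b K := by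
          apply mul_le_mul_of_nonneg_right ht1
          rw [hb1]; positivity
      _ ≤ 6 * (((K:ℝ)+1) * Real.log 2) * b K := by
          apply mul_le_mul_of_nonneg_right hkey
          rw [hb1]; positivity
      _ = 6 := by rw [hb1]; field_simp
  -- second piece
  have hB : - ∑ k ∈ range K, t (k+1) * (b (k+1) - b k)
      ≤ Real.log ((K:ℝ)+1) + 5 := by
    have hterm : ∀ k ∈ range K, - (t (k+1) * (b (k+1) - b k))
        ≤ 1/((k:ℝ)+1) + 4 * (1/(((k:ℝ)+1)*((k:ℝ)+2))) := by
      intro k _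
      have hbdiff : b k - b (k+1) = 1/(((k:ℝ)+1)*((k:ℝ)+2)*Real.log 2) := by
        show 1/(((k:ℝ)+1) * Real.log 2) - 1/((((k+1:ℕ):ℝ)+1) * Real.log 2)
            = 1/(((k:ℝ)+1)*((k:ℝ)+2)*Real.log 2)
        push_cast
        rw [div_sub_div _ _ (by positivity) (by positivity), div_eq_div_iff (by positivity) (by positivity)]
        ring
      have ht1 : t (k+1) ≤ (((k:ℝ)+1)+1) * Real.log 2 + 2 := by
        have := t_ub (k+1)
        push_cast at this ⊢
        exact this
      have ht1' : t (k+1) ≤ ((k:ℝ)+2) * Real.log 2 + 2 := by linarith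
      have hpos : (0:ℝ) < ((k:ℝ)+1)*((k:ℝ)+2)*Real.log 2 := by positivity
      have step1 : - (t (k+1) * (b (k+1) - b k)) = t (k+1) * (b k - b (k+1)) := by ring
      rw [step1, hbdiff]
      calc t (k+1) * (1/(((k:ℝ)+1)*((k:ℝ)+2)*Real.log 2))
          ≤ (((k:ℝ)+2) * Real.log 2 + 2) * (1/(((k:ℝ)+1)*((k:ℝ)+2)*Real.log 2)) := by
            apply mul_le_mul_of_nonneg_right ht1' (by positivity)
        _ = 1/((k:ℝ)+1) + 2 * (1/(((k:ℝ)+1)*((k:ℝ)+2)*Real.log 2)) := by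
            field_simp
        _ ≤ 1/((k:ℝ)+1) + 4 * (1/(((k:ℝ)+1)*((k:ℝ)+2))) := by
            have hq : 2 * (1/(((k:ℝ)+1)*((k:ℝ)+2)*Real.log 2)) ≤ 4 * (1/(((k:ℝ)+1)*((k:ℝ)+2))) := by
              rw [mul_one_div, mul_one_div, div_le_div_iff₀ hpos (by positivity)]
              nlinarith [Nat.cast_nonneg (α := ℝ) k]
            linarith
    calc - ∑ k ∈ range K, t (k+1) * (b (k+1) - b k)
        = ∑ k ∈ range K, - (t (k+1) * (b (k+1) - b k)) := by rw [Finset.sum_neg_distrib]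
      _ ≤ ∑ k ∈ range K, (1/((k:ℝ)+1) + 4 * (1/(((k:ℝ)+1)*((k:ℝ)+2)))) :=
          Finset.sum_le_sum hterm
      _ = H K + 4 * ∑ k ∈ range K, 1/(((k:ℝ)+1)*((k:ℝ)+2)) := by
          rw [Finset.sum_add_distrib, ← Finset.mul_sum, H]
      _ ≤ (Real.log ((K:ℝ)+1) + 1) + 4 * 1 := by
          have := H_le' K
          have := telescope K
          have h4 : 4 * ∑ k ∈ range K, 1/(((k:ℝ)+1)*((k:ℝ)+2)) ≤ 4 * 1 := by
            apply mul_le_mul_of_nonneg_left (telescope K) (by norm_num)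
          linarith
      _ = Real.log ((K:ℝ)+1) + 5 := by ring
  have hb00 : t 0 * b 0 = 0 := by rw [ht0]; ring
  linarith [h2, hA, hB]

end MertensAux

namespace MertensAux
open Finset Nat

set_option maxHeartbeats 1000000 in
lemma Mp_lb (K : ℕ) : Real.log ((K:ℝ)+1) - 17 ≤ Mp (2^(K+2)) := by
  have hL := log2_ge
  have hU := log2_le
  have hL0 : (0:ℝ) < Real.log 2 := by linarith
  set t : ℕ → ℝ := fun k => Tp (2^(k+1)) with ht_def
  set c : ℕ → ℝ := fun k => 1/(((k:ℝ)+2) * Real.log 2) with hc_def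
  have habel := abel t c K
  have ht0 : t 0 = 0 := by
    show Tp (2^(0+1)) = 0
    norm_num [Tp]
  have h1 : Mp (2^(K+2)) = ∑ k ∈ range (K+1), (Mp (2^(k+2)) - Mp (2^(k+1))) :=
    Mp_telescope (K+1)
  have h2 : ∑ k ∈ range (K+1), (t (k+1) - t k) * c k ≤ Mp (2^(K+2)) := by
    rw [h1]
    exact Finset.sum_le_sum (fun k _ => block_lb k)
  rw [habel, ht0] at h2
  -- first piece nonneg
  have hA : 0 ≤ t (K+1) * c K := by
    have h1' : 0 ≤ t (K+1) := Tp_nonneg _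
    have h2' : 0 ≤ c K := by
      show (0:ℝ) ≤ 1/(((K:ℝ)+2) * Real.log 2)
      positivity
    positivity
  -- second piece
  have hB : Real.log ((K:ℝ)+1) - 33/2 ≤ - ∑ k ∈ range K, t (k+1) * (c (k+1) - c k) := by
    have hterm : ∀ k ∈ range K, 1/((k:ℝ)+3) - 15 * (1/(((k:ℝ)+1)*((k:ℝ)+2)))
        ≤ - (t (k+1) * (c (k+1) - c k)) := by
      intro k _
      have hcdiff : c k - c (k+1) = 1/(((k:ℝ)+2)*((k:ℝ)+3)*Real.log 2) := by
        show 1/(((k:ℝ)+2) * Real.log 2) - 1/((((k+1:ℕ):ℝ)+2) * Real.log 2)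
            = 1/(((k:ℝ)+2)*((k:ℝ)+3)*Real.log 2)
        push_cast
        rw [div_sub_div _ _ (by positivity) (by positivity), div_eq_div_iff (by positivity) (by positivity)]
        ring
      have ht1 : (((k:ℝ)+1)) * Real.log 2 - 7 ≤ t (k+1) := by
        have := t_lb (k+1)
        push_cast at this ⊢
        exact this
      have hpos : (0:ℝ) < ((k:ℝ)+2)*((k:ℝ)+3)*Real.log 2 := by positivity
      have step1 : - (t (k+1) * (c (k+1) - c k)) = t (k+1) * (c k - c (k+1)) := by ring
      rw [step1, hcdiff]
      calc 1/((k:ℝ)+3) - 15 * (1/(((k:ℝ)+1)*((k:ℝ)+2)))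
          ≤ ((((k:ℝ)+1)) * Real.log 2 - 7) * (1/(((k:ℝ)+2)*((k:ℝ)+3)*Real.log 2)) := by
            have hexp : ((((k:ℝ)+1)) * Real.log 2 - 7) * (1/(((k:ℝ)+2)*((k:ℝ)+3)*Real.log 2))
                = 1/((k:ℝ)+3) - 1/(((k:ℝ)+2)*((k:ℝ)+3)) - 7 * (1/(((k:ℝ)+2)*((k:ℝ)+3)*Real.log 2)) := by
              field_simp
              ring
            rw [hexp]
            have hq1 : 7 * (1/(((k:ℝ)+2)*((k:ℝ)+3)*Real.log 2)) ≤ 14 * (1/(((k:ℝ)+2)*((k:ℝ)+3))) := by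
              rw [mul_one_div, mul_one_div, div_le_div_iff₀ hpos (by positivity)]
              nlinarith [Nat.cast_nonneg (α := ℝ) k]
            have hq2 : 1/(((k:ℝ)+2)*((k:ℝ)+3)) ≤ 1/(((k:ℝ)+1)*((k:ℝ)+2)) := by
              apply one_div_le_one_div_of_le (by positivity)
              nlinarith [Nat.cast_nonneg (α := ℝ) k]
            linarith
        _ ≤ t (k+1) * (1/(((k:ℝ)+2)*((k:ℝ)+3)*Real.log 2)) := by
            apply mul_le_mul_of_nonneg_right ht1 (by positivity)
    have hsum := Finset.sum_le_sum hterm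
    have hleft : ∑ k ∈ range K, (1/((k:ℝ)+3) - 15 * (1/(((k:ℝ)+1)*((k:ℝ)+2))))
        = (H (K+2) - 3/2) - 15 * ∑ k ∈ range K, 1/(((k:ℝ)+1)*((k:ℝ)+2)) := by
      rw [Finset.sum_sub_distrib, ← Finset.mul_sum, sum_shift3]
    have hright : ∑ k ∈ range K, - (t (k+1) * (c (k+1) - c k))
        = - ∑ k ∈ range K, t (k+1) * (c (k+1) - c k) := by
      rw [Finset.sum_neg_distrib]
    rw [hleft, hright] at hsum
    have hH : Real.log ((K:ℝ)+1) ≤ H (K+2) := by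
      have hle2 := le_H (K+2)
      push_cast at hle2
      have hmono : Real.log ((K:ℝ)+1) ≤ Real.log (((K+2:ℕ):ℝ)+1) := by
        apply Real.log_le_log (by positivity)
        push_cast
        linarith
      push_cast at hmono
      linarith [hle2]
    have htel : 15 * ∑ k ∈ range K, 1/(((k:ℝ)+1)*((k:ℝ)+2)) ≤ 15 :=
      le_trans (mul_le_mul_of_nonneg_left (telescope K) (by norm_num)) (by norm_num)
    linarith
  linarith [h2, hA, hB]

lemma Mp_central (K : ℕ) : |Mp (2^(K+2)) - Real.log ((K:ℝ)+1)| ≤ 17 := by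
  have h1 := Mp_ub K
  have h2 := Mp_lb K
  rw [abs_le]
  constructor <;> linarith

end MertensAux

namespace MertensAux
open Finset Nat Filter

lemma loglog2_bounds : -1 ≤ Real.log (Real.log 2) ∧ Real.log (Real.log 2) ≤ 0 := by
  have hL := log2_ge
  have hU := log2_le
  have hL0 : (0:ℝ) < Real.log 2 := by linarith
  constructor
  · have h1 : Real.log (1/2) ≤ Real.log (Real.log 2) :=
      Real.log_le_log (by norm_num) hL
    have h2 : Real.log (1/2 : ℝ) = - Real.log 2 := by
      rw [one_div, Real.log_inv]
    linarith
  · exact Real.log_nonpos (by linarith) hU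

lemma Mp_general {N : ℕ} (hN : 4 ≤ N) : |Mp (N+1) - Real.log (Real.log N)| ≤ 20 := by
  have hL := log2_ge
  have hU := log2_le
  have hL0 : (0:ℝ) < Real.log 2 := by linarith
  obtain ⟨hll2a, hll2b⟩ := loglog2_bounds
  set K := Nat.log 2 N with hK_def
  have hK2 : 2 ≤ K := by
    rw [hK_def]
    have : (2:ℕ)^2 ≤ N := by omega
    exact (Nat.le_log_iff_pow_le (by norm_num) (by omega)).mpr this
  obtain ⟨J, hJ⟩ : ∃ J, K = J + 2 := ⟨K - 2, by omega⟩
  have h2K : 2^K ≤ N := Nat.pow_log_le_self 2 (by omega)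
  have hN2K : N < 2^(K+1) := Nat.lt_pow_succ_log_self (by norm_num) N
  -- Mp bounds
  have hMub : Mp (N+1) ≤ Real.log ((J:ℝ)+2) + 11 := by
    have h1 : Mp (N+1) ≤ Mp (2^(K+1)) := Mp_mono (by omega)
    have h2 : Mp (2^(K+1)) = Mp (2^((J+1)+2)) := by rw [hJ]
    have h3 := Mp_ub (J+1)
    push_cast at h3
    calc Mp (N+1) ≤ Mp (2^((J+1)+2)) := h2 ▸ h1
      _ ≤ Real.log ((J:ℝ)+1+1) + 11 := h3
      _ = Real.log ((J:ℝ)+2) + 11 := by ring_nf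
  have hMlb : Real.log ((J:ℝ)+1) - 17 ≤ Mp (N+1) := by
    have h1 : Mp (2^K) ≤ Mp (N+1) := Mp_mono (by omega)
    have h2 : Mp (2^K) = Mp (2^(J+2)) := by rw [hJ]
    have h3 := Mp_lb J
    calc Real.log ((J:ℝ)+1) - 17 ≤ Mp (2^(J+2)) := h3
      _ = Mp (2^K) := h2.symm
      _ ≤ Mp (N+1) := h1
  -- log N bounds
  have hJ0 : (0:ℝ) ≤ (J:ℝ) := Nat.cast_nonneg J
  have hlogN_lb : ((J:ℝ)+2) * Real.log 2 ≤ Real.log N := by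
    have : ((2^K : ℕ):ℝ) ≤ (N:ℝ) := by exact_mod_cast h2K
    rw [two_pow_cast] at this
    have h1 := Real.log_le_log (by positivity) this
    rw [log_two_pow] at h1
    rw [hJ] at h1
    push_cast at h1
    linarith
  have hlogN_ub : Real.log N ≤ ((J:ℝ)+3) * Real.log 2 := by
    have : (N:ℝ) ≤ ((2^(K+1) : ℕ):ℝ) := by exact_mod_cast le_of_lt hN2K
    rw [two_pow_cast] at this
    have hN0 : (0:ℝ) < N := by
      have : (4:ℕ) ≤ N := hN
      exact_mod_cast lt_of_lt_of_le (by norm_num : (0:ℕ) < 4) this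
    have h1 := Real.log_le_log hN0 this
    rw [log_two_pow, hJ] at h1
    push_cast at h1
    linarith
  have hlogN_pos : (1:ℝ) ≤ Real.log N := by nlinarith
  -- loglog bounds
  have hll_lb : Real.log ((J:ℝ)+2) + Real.log (Real.log 2) ≤ Real.log (Real.log N) := by
    have h1 : Real.log (((J:ℝ)+2) * Real.log 2) ≤ Real.log (Real.log N) :=
      Real.log_le_log (by positivity) hlogN_lb
    rw [Real.log_mul (by positivity) (ne_of_gt hL0)] at h1
    linarith
  have hll_ub : Real.log (Real.log N) ≤ Real.log ((J:ℝ)+3) + Real.log (Real.log 2) := by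
    have h1 : Real.log (Real.log N) ≤ Real.log (((J:ℝ)+3) * Real.log 2) :=
      Real.log_le_log (by linarith) hlogN_ub
    rw [Real.log_mul (by positivity) (ne_of_gt hL0)] at h1
    linarith
  -- log spacing
  have hsp1 : Real.log ((J:ℝ)+3) ≤ Real.log ((J:ℝ)+2) + 1 := by
    have h1 : Real.log ((J:ℝ)+3) ≤ Real.log (2*((J:ℝ)+2)) :=
      Real.log_le_log (by positivity) (by linarith)
    rw [Real.log_mul (by norm_num) (by positivity)] at h1
    linarith
  have hsp2 : Real.log ((J:ℝ)+2) ≤ Real.log ((J:ℝ)+1) + 1 := by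
    have h1 : Real.log ((J:ℝ)+2) ≤ Real.log (2*((J:ℝ)+1)) :=
      Real.log_le_log (by positivity) (by linarith)
    rw [Real.log_mul (by norm_num) (by positivity)] at h1
    linarith
  rw [abs_le]
  constructor <;> linarith

lemma Mp_tendsto : Tendsto (fun N : ℕ => Mp (N+1) / Real.log (Real.log N)) atTop (nhds 1) := by
  have hll : Tendsto (fun N : ℕ => Real.log (Real.log N)) atTop atTop :=
    Real.tendsto_log_atTop.comp (Real.tendsto_log_atTop.comp tendsto_natCast_atTop_atTop)
  have hlo : Tendsto (fun N : ℕ => 1 - 20 / Real.log (Real.log N)) atTop (nhds 1) := by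
    have h0 : Tendsto (fun N : ℕ => 20 / Real.log (Real.log N)) atTop (nhds 0) :=
      Tendsto.div_atTop tendsto_const_nhds hll
    have h1 : Tendsto (fun _ : ℕ => (1:ℝ)) atTop (nhds 1) := tendsto_const_nhds
    have := h1.sub h0
    simpa using this
  have hhi : Tendsto (fun N : ℕ => 1 + 20 / Real.log (Real.log N)) atTop (nhds 1) := by
    have h0 : Tendsto (fun N : ℕ => 20 / Real.log (Real.log N)) atTop (nhds 0) :=
      Tendsto.div_atTop tendsto_const_nhds hll
    have h1 : Tendsto (fun _ : ℕ => (1:ℝ)) atTop (nhds 1) := tendsto_const_nhds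
    have := h1.add h0
    simpa using this
  apply tendsto_of_tendsto_of_tendsto_of_le_of_le' hlo hhi
  · filter_upwards [hll.eventually_gt_atTop 0, eventually_ge_atTop 4] with N hpos hN4
    have h := Mp_general hN4
    rw [abs_le] at h
    rw [le_div_iff₀ hpos, sub_mul, one_mul, div_mul_cancel₀ _ (ne_of_gt hpos)]
    linarith [h.1]
  · filter_upwards [hll.eventually_gt_atTop 0, eventually_ge_atTop 4] with N hpos hN4
    have h := Mp_general hN4
    rw [abs_le] at h
    rw [div_le_iff₀ hpos, add_mul, one_mul, div_mul_cancel₀ _ (ne_of_gt hpos)]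
    linarith [h.2]

end MertensAux

namespace MertensAux
open Finset Nat Filter

lemma tsum_cutoff (N : ℕ) (r : ℝ) :
    (∑' p : Nat.Primes, if (p : ℕ) ≤ N then ((p : ℕ) : ℝ) ^ r else 0)
      = ∑ p ∈ (N+1).primesBelow, (p:ℝ) ^ r := by
  classical
  have h := tsum_eq_sum (L := SummationFilter.unconditional _)
    (f := fun p : Nat.Primes => if (p : ℕ) ≤ N then ((p : ℕ) : ℝ) ^ r else 0)
    (s := ((N+1).primesBelow).subtype (fun n => Nat.Prime n)) ?hout
  case hout =>
    intro p hp
    replace hp := mt Finset.mem_subtype.mpr hp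
    have : ¬ ((p:ℕ) ≤ N) := by
      intro hle
      exact hp (Nat.mem_primesBelow.mpr ⟨Nat.lt_succ_of_le hle, p.2⟩)
    simp [this]
  rw [h]
  apply Finset.sum_bij (i := fun (p : Nat.Primes) _ => (p : ℕ))
  · intro p hp
    replace hp := Finset.mem_subtype.mp hp
    exact hp
  · intro p _ q _ hpq
    exact Subtype.ext hpq
  · intro q hq
    exact ⟨⟨q, Nat.prime_of_mem_primesBelow hq⟩, Finset.mem_subtype.mpr hq, rfl⟩
  · intro p hp
    replace hp := Finset.mem_subtype.mp hp
    have : (p:ℕ) ≤ N := Nat.lt_succ_iff.mp (Nat.lt_of_mem_primesBelow hp)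
    simp [this]

lemma term_ub {p N : ℕ} (hp : p.Prime) (s : ℝ) (hs : 0 < s) :
    (p:ℝ) ^ (-(1+2*s)) ≤ 1/(p:ℝ) := by
  have hp1 : (1:ℝ) ≤ (p:ℝ) := by exact_mod_cast hp.one_lt.le
  calc (p:ℝ) ^ (-(1+2*s)) ≤ (p:ℝ) ^ (-1 : ℝ) :=
        Real.rpow_le_rpow_of_exponent_le hp1 (by linarith)
    _ = 1/(p:ℝ) := by rw [Real.rpow_neg_one, one_div]

lemma term_lb {p N : ℕ} (hp : p.Prime) (hpN : p ≤ N) (s : ℝ) (hs : 0 < s) :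
    Real.exp (-(2*(s * Real.log N))) * (1/(p:ℝ)) ≤ (p:ℝ) ^ (-(1+2*s)) := by
  have hp0 : (0:ℝ) < (p:ℝ) := by exact_mod_cast hp.pos
  have hsplit : (p:ℝ) ^ (-(1+2*s)) = (p:ℝ) ^ (-(2*s)) * (p:ℝ) ^ (-1:ℝ) := by
    rw [← Real.rpow_add hp0]
    norm_num
  rw [hsplit, Real.rpow_neg_one]
  have hexp : (p:ℝ) ^ (-(2*s)) = Real.exp (Real.log p * (-(2*s))) :=
    Real.rpow_def_of_pos hp0 _
  have hmono : Real.exp (-(2*(s * Real.log N))) ≤ (p:ℝ) ^ (-(2*s)) := by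
    rw [hexp]
    apply Real.exp_le_exp.mpr
    have hlogle : Real.log p ≤ Real.log N := by
      apply Real.log_le_log hp0
      exact_mod_cast hpN
    nlinarith
  have hinv : (0:ℝ) ≤ ((p:ℝ))⁻¹ := by positivity
  calc Real.exp (-(2*(s * Real.log N))) * (1/(p:ℝ))
      ≤ (p:ℝ) ^ (-(2*s)) * (1/(p:ℝ)) := by
        apply mul_le_mul_of_nonneg_right hmono (by positivity)
    _ = (p:ℝ) ^ (-(2*s)) * ((p:ℝ))⁻¹ := by rw [one_div]

lemma sum_bounds {N : ℕ} (s : ℝ) (hs : 0 < s) :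
    Real.exp (-(2*(s * Real.log N))) * Mp (N+1) ≤ (∑ p ∈ (N+1).primesBelow, (p:ℝ) ^ (-(1+2*s)))
      ∧ (∑ p ∈ (N+1).primesBelow, (p:ℝ) ^ (-(1+2*s))) ≤ Mp (N+1) := by
  constructor
  · rw [Mp, Finset.mul_sum]
    apply Finset.sum_le_sum
    intro p hp
    exact term_lb (Nat.prime_of_mem_primesBelow hp)
      (Nat.lt_succ_iff.mp (Nat.lt_of_mem_primesBelow hp)) s hs
  · rw [Mp]
    apply Finset.sum_le_sum
    intro p hp
    exact term_ub (N := N) (Nat.prime_of_mem_primesBelow hp) s hs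

end MertensAux

namespace MertensAux
open Finset Nat Filter

lemma loglog_pos {N : ℕ} (hN : 16 ≤ N) : 0 < Real.log (Real.log N) := by
  have h16 : (16:ℝ) ≤ (N:ℝ) := by exact_mod_cast hN
  have hlog : Real.log 16 ≤ Real.log N := Real.log_le_log (by norm_num) h16
  have h2 : (2:ℝ) ≤ Real.log 16 := by
    have h : (16:ℝ) = 2^(4:ℕ) := by norm_num
    rw [h, log_two_pow]
    have := log2_ge
    norm_num
    linarith
  exact Real.log_pos (by linarith)

end MertensAux

open Filter

/-- If `N₁(s) → ∞` and `s · log N₁(s) → 0` as `s → 0+`, then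
`∑_{p ≤ N₁(s)} p^{-1-2s} ~ log log N₁(s)` as `s → 0+`. -/
theorem initial_prime_sum_asymp (N₁ : ℝ → ℕ)
    (h1 : Tendsto N₁ (nhdsWithin 0 (Set.Ioi 0)) atTop)
    (h2 : Tendsto (fun s : ℝ => s * Real.log (N₁ s)) (nhdsWithin 0 (Set.Ioi 0)) (nhds 0)) :
    Tendsto (fun s : ℝ =>
        (∑' p : Nat.Primes, if (p : ℕ) ≤ N₁ s then ((p : ℕ) : ℝ) ^ (-(1 + 2 * s)) else 0) /
          Real.log (Real.log (N₁ s)))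
      (nhdsWithin 0 (Set.Ioi 0)) (nhds 1) := by
  have hMten : Tendsto (fun s : ℝ => MertensAux.Mp (N₁ s + 1) / Real.log (Real.log (N₁ s)))
      (nhdsWithin 0 (Set.Ioi 0)) (nhds 1) := MertensAux.Mp_tendsto.comp h1
  have hE : Tendsto (fun s : ℝ => Real.exp (-(2*(s * Real.log (N₁ s)))))
      (nhdsWithin 0 (Set.Ioi 0)) (nhds 1) := by
    have h3 : Tendsto (fun s : ℝ => -(2*(s * Real.log (N₁ s))))
        (nhdsWithin 0 (Set.Ioi 0)) (nhds 0) := by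
      have h4 := h2.const_mul (-2:ℝ)
      norm_num at h4
      simpa [neg_mul] using h4
    have h4 := (Real.continuous_exp.tendsto 0).comp h3
    simpa [Function.comp_def] using h4
  have hlow : Tendsto (fun s : ℝ => Real.exp (-(2*(s * Real.log (N₁ s))))
      * (MertensAux.Mp (N₁ s + 1) / Real.log (Real.log (N₁ s))))
      (nhdsWithin 0 (Set.Ioi 0)) (nhds 1) := by
    have := hE.mul hMten
    simpa using this
  apply tendsto_of_tendsto_of_tendsto_of_le_of_le' hlow hMten
  · filter_upwards [self_mem_nhdsWithin, h1.eventually_ge_atTop 16] with s hs hN16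
    have hs0 : (0:ℝ) < s := hs
    have hLL : 0 < Real.log (Real.log (N₁ s)) := MertensAux.loglog_pos hN16
    rw [MertensAux.tsum_cutoff (N₁ s) (-(1+2*s))]
    rw [← mul_div_assoc]
    apply div_le_div_of_nonneg_right ?_ ?_ |>.trans_eq rfl
    · exact (MertensAux.sum_bounds s hs0).1
    · exact hLL.le
  · filter_upwards [self_mem_nhdsWithin, h1.eventually_ge_atTop 16] with s hs hN16
    have hs0 : (0:ℝ) < s := hs
    have hLL : 0 < Real.log (Real.log (N₁ s)) := MertensAux.loglog_pos hN16
    rw [MertensAux.tsum_cutoff (N₁ s) (-(1+2*s))]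
    apply div_le_div_of_nonneg_right ?_ ?_ |>.trans_eq rfl
    · exact (MertensAux.sum_bounds s hs0).2
    · exact hLL.le
end

section
/- Let η₁, η₂, … be i.i.d. with E[η] = 0 and E[η²] = 1, let M : (0, e^{-e}) → ℕ satisfy M(s) → ∞ and M(s)/log(1/s) → 0 as s → 0+, and set L(s) = (2 log(1/s) · log log log(1/s))^{-1/2}. Then lim_{s→0+} L(s) ∑_{p prime, p ≤ M(s)} η_p · p^{-1/2-s} = 0 almost surely. -/
open MeasureTheory ProbabilityTheory Filter

private lemma key_ineq (n : ℕ) (hn : 1 ≤ n) :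
    ((n : ℝ) + 1) * ((Real.sqrt n)⁻¹ - (Real.sqrt ((n : ℝ) + 1))⁻¹) ≤
      2 * (Real.sqrt ((n : ℝ) + 1) - Real.sqrt n) := by
  have hn' : (1 : ℝ) ≤ n := by exact_mod_cast hn
  set u := Real.sqrt n with hu_def
  set v := Real.sqrt ((n : ℝ) + 1) with hv_def
  have hu : u * u = n := Real.mul_self_sqrt (by positivity)
  have hv : v * v = (n : ℝ) + 1 := Real.mul_self_sqrt (by positivity)
  have hu1 : (1 : ℝ) ≤ u := by
    rw [hu_def, show (1:ℝ) = Real.sqrt 1 by simp]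
    exact Real.sqrt_le_sqrt hn'
  have hu0 : (0 : ℝ) < u := lt_of_lt_of_le one_pos hu1
  have hv0 : (0 : ℝ) < v := Real.sqrt_pos.2 (by positivity)
  have huv : u ≤ v := Real.sqrt_le_sqrt (by linarith)
  have h2 : v ≤ 2 * u := by
    have : v * v ≤ (2 * u) * (2 * u) := by nlinarith
    nlinarith
  rw [inv_sub_inv hu0.ne' hv0.ne', mul_div_assoc' , div_le_iff₀ (by positivity)]
  nlinarith [mul_nonneg (mul_nonneg hv0.le (sub_nonneg.2 huv)) (sub_nonneg.2 h2)]

private lemma sum_weight_bound (a : ℕ → ℝ) (ha : ∀ k, 0 ≤ a k) {C : ℝ}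
    (hA : ∀ n : ℕ, ∑ k ∈ Finset.range n, a k ≤ C * n) (n : ℕ) :
    ∑ k ∈ Finset.range n, a k * (Real.sqrt k)⁻¹ ≤ 3 * C * Real.sqrt n := by
  have hC : (0 : ℝ) ≤ C := le_trans (ha 0) (by simpa using hA 1)
  have main : ∀ n : ℕ, ∑ k ∈ Finset.range n, a k * (Real.sqrt k)⁻¹ ≤
      2 * C * Real.sqrt n + (∑ k ∈ Finset.range n, a k) * (Real.sqrt n)⁻¹ := by
    intro n
    induction n with
    | zero => simp
    | succ n ih =>
      rcases Nat.eq_zero_or_pos n with rfl | hn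
      · simp only [Finset.sum_range_one, Finset.sum_range_succ]
        norm_num
        nlinarith [ha 0]
      · have hAn1 : ∑ k ∈ Finset.range (n + 1), a k ≤ C * ((n : ℝ) + 1) := by
          have := hA (n + 1); push_cast at this ⊢; linarith
        have hAn1' : (0 : ℝ) ≤ ∑ k ∈ Finset.range (n + 1), a k :=
          Finset.sum_nonneg fun k _ => ha k
        have hmono : (Real.sqrt ((n : ℝ) + 1))⁻¹ ≤ (Real.sqrt n)⁻¹ := by
          apply inv_anti₀ (Real.sqrt_pos.2 (by positivity))
          exact Real.sqrt_le_sqrt (by push_cast; linarith)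
        have hd : (0:ℝ) ≤ (Real.sqrt n)⁻¹ - (Real.sqrt ((n : ℝ) + 1))⁻¹ := by linarith
        have key : (∑ k ∈ Finset.range (n + 1), a k) *
              ((Real.sqrt n)⁻¹ - (Real.sqrt ((n : ℝ) + 1))⁻¹) ≤
              2 * C * (Real.sqrt ((n : ℝ) + 1) - Real.sqrt n) := by
          calc (∑ k ∈ Finset.range (n + 1), a k) *
              ((Real.sqrt n)⁻¹ - (Real.sqrt ((n : ℝ) + 1))⁻¹)
              ≤ (C * ((n : ℝ) + 1)) * ((Real.sqrt n)⁻¹ - (Real.sqrt ((n : ℝ) + 1))⁻¹) :=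
                mul_le_mul_of_nonneg_right hAn1 hd
            _ ≤ C * (2 * (Real.sqrt ((n : ℝ) + 1) - Real.sqrt n)) := by
                rw [mul_assoc]
                exact mul_le_mul_of_nonneg_left (key_ineq n hn) hC
            _ = 2 * C * (Real.sqrt ((n : ℝ) + 1) - Real.sqrt n) := by ring
        rw [Finset.sum_range_succ, Finset.sum_range_succ (f := a)]
        push_cast
        rw [Finset.sum_range_succ] at key
        nlinarith [ih, key]
  have hfin := main n
  have hns : (n : ℝ) * (Real.sqrt n)⁻¹ = Real.sqrt n := by
    rcases Nat.eq_zero_or_pos n with rfl | hn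
    · simp
    · have h0 : Real.sqrt n ≠ 0 := ne_of_gt (Real.sqrt_pos.2 (by positivity))
      rw [← Real.mul_self_sqrt (le_of_lt (by positivity : (0:ℝ) < (n:ℝ)))]
      field_simp
      rw [Real.sqrt_sq (Real.sqrt_nonneg _)]
  have h2 : (∑ k ∈ Finset.range n, a k) * (Real.sqrt n)⁻¹ ≤ (C * n) * (Real.sqrt n)⁻¹ :=
    mul_le_mul_of_nonneg_right (hA n) (by positivity)
  have h3 : (C * n) * (Real.sqrt n)⁻¹ = C * Real.sqrt n := by
    rw [mul_assoc, hns]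
  linarith

/-- Lemma 2: for i.i.d. `η` with mean `0`, variance `1`, and `M(s) → ∞` with
`M(s)/log(1/s) → 0`, the initial fragment `L(s) ∑_{p ≤ M(s)} η_p p^{-1/2-s}`
tends to `0` a.s. as `s → 0+`, where `L(s) = (2 log(1/s) log log log(1/s))^{-1/2}`. -/
theorem initial_fragment_vanishes {Ω : Type*} [MeasureSpace Ω]
    [IsProbabilityMeasure (ℙ : Measure Ω)]
    (η : ℕ → Ω → ℝ) (hmeas : ∀ i, Measurable (η i))
    (hindep : iIndepFun η ℙ)
    (hident : ∀ i, IdentDistrib (η i) (η 0) ℙ ℙ)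
    (hmean : ∫ ω, η 0 ω ∂(ℙ : Measure Ω) = 0)
    (hvar : ∫ ω, (η 0 ω) ^ 2 ∂(ℙ : Measure Ω) = 1)
    (M : ℝ → ℕ)
    (hM1 : Tendsto M (nhdsWithin 0 (Set.Ioi 0)) atTop)
    (hM2 : Tendsto (fun s : ℝ => (M s : ℝ) / Real.log (1 / s))
      (nhdsWithin 0 (Set.Ioi 0)) (nhds 0)) :
    ∀ᵐ ω ∂(ℙ : Measure Ω),
      Tendsto (fun s : ℝ =>
          (2 * Real.log (1 / s) * Real.log (Real.log (Real.log (1 / s)))) ^ (-(1 / 2 : ℝ)) *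
            ∑ p ∈ Finset.filter Nat.Prime (Finset.range (M s + 1)),
              η p ω * (p : ℝ) ^ (-(1 / 2 + s)))
        (nhdsWithin 0 (Set.Ioi 0)) (nhds 0) := by
  -- integrability
  have hint2 : Integrable (fun ω => (η 0 ω) ^ 2) (ℙ : Measure Ω) := by
    by_contra h
    rw [integral_undef h] at hvar
    exact one_ne_zero hvar.symm
  have hL2 : MemLp (η 0) 2 (ℙ : Measure Ω) :=
    (memLp_two_iff_integrable_sq (hmeas 0).aestronglyMeasurable).2 hint2
  have hint1 : Integrable (η 0) (ℙ : Measure Ω) := hL2.integrable one_le_two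
  have habs : Integrable (fun ω => |η 0 ω|) (ℙ : Measure Ω) := hint1.abs
  -- strong law for |η|
  have hslln := ProbabilityTheory.strong_law_ae (μ := (ℙ : Measure Ω))
    (fun i ω => |η i ω|) habs
    (fun i j hij => (hindep.indepFun hij).comp measurable_abs measurable_abs)
    (fun i => (hident i).comp measurable_abs)
  filter_upwards [hslln] with ω hω
  -- a linear bound on partial sums of |η|
  obtain ⟨C₀, hC₀⟩ := hω.bddAbove_range
  set C : ℝ := max C₀ 0 with hC_def
  have hA : ∀ n : ℕ, ∑ k ∈ Finset.range n, |η k ω| ≤ C * n := by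
    intro n
    rcases Nat.eq_zero_or_pos n with rfl | hn
    · simp
    · have hb : (n : ℝ)⁻¹ • (∑ k ∈ Finset.range n, |η k ω|) ≤ C₀ :=
        hC₀ (Set.mem_range_self n)
      rw [smul_eq_mul] at hb
      have hn0 : (0 : ℝ) < n := by exact_mod_cast hn
      have := mul_le_mul_of_nonneg_left hb hn0.le
      rw [← mul_assoc, mul_inv_cancel₀ hn0.ne', one_mul] at this
      calc ∑ k ∈ Finset.range n, |η k ω| ≤ (n : ℝ) * C₀ := this
        _ ≤ (n : ℝ) * C := by
            exact mul_le_mul_of_nonneg_left (le_max_left _ _) hn0.le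
        _ = C * n := mul_comm _ _
  have hC : (0 : ℝ) ≤ C := le_max_right _ _
  have hS : ∀ n : ℕ, ∑ k ∈ Finset.range n, |η k ω| * (Real.sqrt k)⁻¹ ≤
      3 * C * Real.sqrt n :=
    sum_weight_bound (fun k => |η k ω|) (fun k => abs_nonneg _) hA
  -- auxiliary limits
  have hinv : Tendsto (fun s : ℝ => 1 / s) (nhdsWithin 0 (Set.Ioi 0)) atTop := by
    simpa [one_div] using (tendsto_inv_nhdsGT_zero (𝕜 := ℝ))
  have hlog : Tendsto (fun s : ℝ => Real.log (1 / s)) (nhdsWithin 0 (Set.Ioi 0)) atTop :=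
    Real.tendsto_log_atTop.comp hinv
  have hll : Tendsto (fun s : ℝ => Real.log (Real.log (1 / s)))
      (nhdsWithin 0 (Set.Ioi 0)) atTop := Real.tendsto_log_atTop.comp hlog
  have hlll : Tendsto (fun s : ℝ => Real.log (Real.log (Real.log (1 / s))))
      (nhdsWithin 0 (Set.Ioi 0)) atTop := Real.tendsto_log_atTop.comp hll
  -- the squeezing function tends to zero
  have h1 : Tendsto (fun s : ℝ => ((M s : ℝ) + 1) / Real.log (1 / s))
      (nhdsWithin 0 (Set.Ioi 0)) (nhds 0) := by
    have := hM2.add hlog.inv_tendsto_atTop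
    simp only [add_zero] at this
    refine this.congr fun s => ?_
    simp only [Pi.inv_apply]
    ring
  have h2 : Tendsto (fun s : ℝ =>
      (2 * Real.log (Real.log (Real.log (1 / s))))⁻¹)
      (nhdsWithin 0 (Set.Ioi 0)) (nhds 0) :=
    (hlll.const_mul_atTop two_pos).inv_tendsto_atTop
  have hfrac : Tendsto (fun s : ℝ =>
      ((M s : ℝ) + 1) / (2 * Real.log (1 / s) * Real.log (Real.log (Real.log (1 / s)))))
      (nhdsWithin 0 (Set.Ioi 0)) (nhds 0) := by
    have := h1.mul h2
    simp only [mul_zero] at this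
    refine this.congr fun s => ?_
    ring
  have hg : Tendsto (fun s : ℝ => 3 * C * Real.sqrt (((M s : ℝ) + 1) /
      (2 * Real.log (1 / s) * Real.log (Real.log (Real.log (1 / s))))))
      (nhdsWithin 0 (Set.Ioi 0)) (nhds 0) := by
    have := hfrac.sqrt.const_mul (3 * C)
    simpa using this
  -- squeeze
  refine squeeze_zero_norm' ?_ hg
  filter_upwards [self_mem_nhdsWithin, hlog.eventually_ge_atTop 1,
    hlll.eventually_ge_atTop 1] with s hs hlog1 hlll1
  set x : ℝ := 2 * Real.log (1 / s) * Real.log (Real.log (Real.log (1 / s))) with hx_def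
  have hx1 : (1 : ℝ) ≤ x := by nlinarith
  have hx0 : (0 : ℝ) < x := lt_of_lt_of_le one_pos hx1
  have hs0 : (0 : ℝ) < s := hs
  -- rewrite the prefactor
  have hpre : x ^ (-(1 / 2 : ℝ)) = (Real.sqrt x)⁻¹ := by
    rw [Real.rpow_neg hx0.le, Real.sqrt_eq_rpow]
  -- bound the sum
  have hsum : |∑ p ∈ Finset.filter Nat.Prime (Finset.range (M s + 1)),
      η p ω * (p : ℝ) ^ (-(1 / 2 + s))| ≤ 3 * C * Real.sqrt ((M s : ℝ) + 1) := by
    calc |∑ p ∈ Finset.filter Nat.Prime (Finset.range (M s + 1)),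
        η p ω * (p : ℝ) ^ (-(1 / 2 + s))|
        ≤ ∑ p ∈ Finset.filter Nat.Prime (Finset.range (M s + 1)),
            |η p ω * (p : ℝ) ^ (-(1 / 2 + s))| := Finset.abs_sum_le_sum_abs _ _
      _ ≤ ∑ p ∈ Finset.filter Nat.Prime (Finset.range (M s + 1)),
            |η p ω| * (Real.sqrt p)⁻¹ := by
          apply Finset.sum_le_sum
          intro p hp
          have hp2 : 1 ≤ (p : ℝ) := by
            have := (Finset.mem_filter.1 hp).2.one_lt
            exact_mod_cast this.le
          rw [abs_mul, abs_of_pos (Real.rpow_pos_of_pos (by linarith) _)]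
          apply mul_le_mul_of_nonneg_left _ (abs_nonneg _)
          calc (p : ℝ) ^ (-(1 / 2 + s)) ≤ (p : ℝ) ^ (-(1 / 2 : ℝ)) :=
              Real.rpow_le_rpow_of_exponent_le hp2 (by linarith)
            _ = (Real.sqrt p)⁻¹ := by
              rw [Real.rpow_neg (by linarith), Real.sqrt_eq_rpow]
      _ ≤ ∑ k ∈ Finset.range (M s + 1), |η k ω| * (Real.sqrt k)⁻¹ := by
          apply Finset.sum_le_sum_of_subset_of_nonneg (Finset.filter_subset _ _)
          intro k _ _
          exact mul_nonneg (abs_nonneg _) (by positivity)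
      _ ≤ 3 * C * Real.sqrt ((M s : ℝ) + 1) := by
          have := hS (M s + 1)
          push_cast at this
          exact this
  -- assemble
  rw [Real.norm_eq_abs, abs_mul, hpre, abs_of_nonneg (by positivity :
    (0:ℝ) ≤ (Real.sqrt x)⁻¹)]
  calc (Real.sqrt x)⁻¹ * |∑ p ∈ Finset.filter Nat.Prime (Finset.range (M s + 1)),
      η p ω * (p : ℝ) ^ (-(1 / 2 + s))|
      ≤ (Real.sqrt x)⁻¹ * (3 * C * Real.sqrt ((M s : ℝ) + 1)) :=
        mul_le_mul_of_nonneg_left hsum (by positivity)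
    _ = 3 * C * Real.sqrt (((M s : ℝ) + 1) / x) := by
        rw [Real.sqrt_div (by positivity : (0:ℝ) ≤ (M s : ℝ) + 1)]
        ring
end

section
/- Let η₁, η₂, … be i.i.d. with E[η] = 0, E[η²] = 1. Set g(s) = ∑_p p^{-1-2s}, h(s) = (log log 1/s)(log log log 1/s)^{1/2}, and for θ > 0 let A_{p,θ}(s) = { |η_p| > θ (log log 1/s)^{-1} (p^{1+2s} g(s) / log log log 1/s)^{1/2} }. Then for every θ > 0 and every M : (0,e^{-e}) → ℕ with M(s) → ∞, one has lim_{s→0+} ∑_{p prime, p ≥ M(s)+1} E[|η_p| 1_{A_{p,θ}(s)}] · p^{-1/2-s} = 0. -/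
set_option maxHeartbeats 1000000

open MeasureTheory ProbabilityTheory Filter

/-- `g(s) = ∑_p p^{-1-2s}`, sum over primes. -/
noncomputable def primeG (s : ℝ) : ℝ :=
  ∑' p : Nat.Primes, ((p : ℕ) : ℝ) ^ (-(1 + 2 * s))

/-- The truncation threshold
`θ (log log 1/s)^{-1} (p^{1+2s} g(s) / log log log 1/s)^{1/2}`. -/
noncomputable def thr (θ s : ℝ) (p : ℕ) : ℝ :=
  θ / Real.log (Real.log (1 / s)) *
    ((p : ℝ) ^ (1 + 2 * s) * primeG s / Real.log (Real.log (Real.log (1 / s)))) ^ (1 / 2 : ℝ)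

lemma neg_log_one_sub_le (t : ℝ) (h0 : 0 ≤ t) (h1 : t ≤ 1/2) :
    Real.log ((1 - t)⁻¹) ≤ 2 * t := by
  rw [Real.log_inv]
  have h2 : Real.exp (-(2*t)) ≤ 1 - t := by
    have h3 := Real.add_one_le_exp (2*t)
    have hpos : (0:ℝ) < 1 + 2*t := by linarith
    have h5 : Real.exp (-(2*t)) ≤ (1 + 2*t)⁻¹ := by
      rw [Real.exp_neg]
      exact inv_anti₀ hpos (by linarith)
    refine h5.trans ?_
    rw [inv_le_iff_one_le_mul₀ hpos]
    nlinarith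
  have := Real.log_le_log (Real.exp_pos _) h2
  rw [Real.log_exp] at this
  linarith

lemma primeG_pos_ge (s : ℝ) (hs : 0 < s) (h7 : 7 ≤ Real.log (1/s)) :
    Real.log (1/s) / 4 ≤ primeG s := by
  set σ : ℝ := 1 + 2*s with hσdef
  have hσ : (1:ℝ) < σ := by simp [hσdef]; linarith
  have hsumf : Summable (fun n : ℕ => (n:ℝ) ^ (-σ)) :=
    Real.summable_nat_rpow.2 (by linarith)
  set f : ℕ →* ℝ :=
    { toFun := fun n => (n:ℝ) ^ (-σ)
      map_one' := by simp
      map_mul' := fun m n => by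
        push_cast
        exact Real.mul_rpow (Nat.cast_nonneg m) (Nat.cast_nonneg n) } with hfdef
  have hf : ∀ n : ℕ, f n = (n:ℝ) ^ (-σ) := fun n => rfl
  set N : ℕ := ⌊Real.exp (1/(2*s))⌋₊ with hNdef
  have hexp_pos : (0:ℝ) < Real.exp (1/(2*s)) := Real.exp_pos _
  have hN1 : 1 ≤ N := Nat.le_floor (by rw [Nat.cast_one]; exact Real.one_le_exp (by positivity))
  have hNle : (N:ℝ) ≤ Real.exp (1/(2*s)) := Nat.floor_le hexp_pos.le
  have hltN : Real.exp (1/(2*s)) < (N:ℝ) + 1 := Nat.lt_floor_add_one _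
  -- lower bound for the partial sum
  set Sig0 : ℝ := ∑ n ∈ Finset.Icc 1 N, f n with hSig0def
  have hterm_ge : ∀ n ∈ Finset.Icc 1 N, (Real.exp 1)⁻¹ * (n:ℝ)⁻¹ ≤ f n := by
    intro n hn
    rw [Finset.mem_Icc] at hn
    have hn0 : (0:ℝ) < n := by exact_mod_cast hn.1
    have hnN : (n:ℝ) ≤ Real.exp (1/(2*s)) := le_trans (by exact_mod_cast hn.2) hNle
    have h1 : f n = (n:ℝ) ^ (-(2*s):ℝ) * (n:ℝ)⁻¹ := by
      rw [hf, show -σ = (-(2*s)) + (-1) by rw [hσdef]; ring, Real.rpow_add hn0,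
        Real.rpow_neg_one]
    have h2 : Real.exp (1/(2*s)) ^ (-(2*s):ℝ) ≤ (n:ℝ) ^ (-(2*s):ℝ) :=
      Real.rpow_le_rpow_of_nonpos hn0 hnN (by linarith)
    have h3 : Real.exp (1/(2*s)) ^ (-(2*s):ℝ) = (Real.exp 1)⁻¹ := by
      rw [Real.rpow_def_of_pos hexp_pos, Real.log_exp, ← Real.exp_neg]
      congr 1
      field_simp
    rw [h1, ← h3]
    have : (0:ℝ) ≤ (n:ℝ)⁻¹ := by positivity
    exact mul_le_mul_of_nonneg_right h2 this
  have hSig0_lb : (Real.exp 1)⁻¹ * (1/(2*s)) ≤ Sig0 := by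
    have hharm : Real.log ((N:ℝ)+1) ≤ (harmonic N : ℝ) := by
      have := log_add_one_le_harmonic N
      push_cast at this ⊢
      convert this using 2
    have hlog : 1/(2*s) ≤ Real.log ((N:ℝ)+1) := by
      have := Real.log_le_log hexp_pos hltN.le
      rwa [Real.log_exp] at this
    have hharm_eq : (harmonic N : ℝ) = ∑ n ∈ Finset.Icc 1 N, (n:ℝ)⁻¹ := by
      rw [harmonic_eq_sum_Icc]
      push_cast
      rfl
    have hsum_ge : ∑ n ∈ Finset.Icc 1 N, (Real.exp 1)⁻¹ * (n:ℝ)⁻¹ ≤ Sig0 :=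
      Finset.sum_le_sum hterm_ge
    rw [← Finset.mul_sum, ← hharm_eq] at hsum_ge
    have h0e : (0:ℝ) ≤ (Real.exp 1)⁻¹ := by positivity
    calc (Real.exp 1)⁻¹ * (1/(2*s)) ≤ (Real.exp 1)⁻¹ * (harmonic N : ℝ) := by
          exact mul_le_mul_of_nonneg_left (hlog.trans hharm) h0e
      _ ≤ Sig0 := hsum_ge
  have hSig0_pos : 0 < Sig0 := lt_of_lt_of_le (by positivity) hSig0_lb
  -- upper bound: Euler product
  have hsub : Sig0 ≤ ∑' m : (Nat.smoothNumbers (N+1)), f m := by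
    rw [tsum_subtype]
    have heq : Sig0 = ∑ n ∈ Finset.Icc 1 N,
        Set.indicator (Nat.smoothNumbers (N+1)) (fun n => f n) n := by
      refine Finset.sum_congr rfl fun n hn => ?_
      rw [Finset.mem_Icc] at hn
      have hmem : n ∈ Nat.smoothNumbers (N+1) := by
        rw [Nat.mem_smoothNumbers']
        intro p hp hdvd
        have : p ≤ n := Nat.le_of_dvd (by omega) hdvd
        omega
      rw [Set.indicator_of_mem hmem]
    rw [heq]
    refine Summable.sum_le_tsum _ (fun n _ => Set.indicator_nonneg (fun m _ => Real.rpow_nonneg (Nat.cast_nonneg m) _) n) ?_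
    exact (hsumf.indicator _)
  have hEuler : ∑' m : (Nat.smoothNumbers (N+1)), f m
      = ∏ p ∈ (N+1).primesBelow, (1 - f p)⁻¹ :=
    (EulerProduct.prod_primesBelow_geometric_eq_tsum_smoothNumbers hsumf (N+1)).symm
  have hfple : ∀ p ∈ (N+1).primesBelow, 0 ≤ f p ∧ f p ≤ 1/2 := by
    intro p hp
    have hprime := Nat.prime_of_mem_primesBelow hp
    have h2p : (2:ℝ) ≤ (p:ℝ) := by exact_mod_cast hprime.two_le
    constructor
    · exact Real.rpow_nonneg (Nat.cast_nonneg p) _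
    · have h1 : (p:ℝ) ^ (-σ) ≤ (p:ℝ) ^ (-1:ℝ) :=
        Real.rpow_le_rpow_of_exponent_le (by linarith) (by linarith)
      have h2 : (p:ℝ) ^ (-1:ℝ) = (p:ℝ)⁻¹ := Real.rpow_neg_one _
      have h3 : (p:ℝ)⁻¹ ≤ 1/2 := by
        rw [inv_le_comm₀ (by linarith) (by norm_num)]
        linarith
      calc f p = (p:ℝ) ^ (-σ) := hf p
        _ ≤ (p:ℝ) ^ (-1:ℝ) := h1
        _ = (p:ℝ)⁻¹ := h2
        _ ≤ 1/2 := h3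
  have hlogprod : Real.log (∏ p ∈ (N+1).primesBelow, (1 - f p)⁻¹)
      ≤ 2 * primeG s := by
    rw [Real.log_prod]
    · have hstep : ∀ p ∈ (N+1).primesBelow, Real.log ((1 - f p)⁻¹) ≤ 2 * f p := by
        intro p hp
        exact neg_log_one_sub_le _ (hfple p hp).1 (hfple p hp).2
      have h1 : ∑ p ∈ (N+1).primesBelow, Real.log ((1 - f p)⁻¹)
          ≤ ∑ p ∈ (N+1).primesBelow, 2 * f p := Finset.sum_le_sum hstep
      have h2 : ∑ p ∈ (N+1).primesBelow, 2 * f p = 2 * ∑ p ∈ (N+1).primesBelow, f p := by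
        rw [Finset.mul_sum]
      have h3 : ∑ p ∈ (N+1).primesBelow, f p ≤ primeG s := by
        have hpg : primeG s = ∑' n : ℕ,
            Set.indicator {p : ℕ | p.Prime} (fun n => (n:ℝ) ^ (-σ)) n := by
          rw [primeG, hσdef]
          exact tsum_subtype {p : ℕ | p.Prime} (fun n => (n:ℝ) ^ (-(1+2*s)))
        rw [hpg]
        have heq2 : ∑ p ∈ (N+1).primesBelow, f p = ∑ p ∈ (N+1).primesBelow,
            Set.indicator {p : ℕ | p.Prime} (fun n => (n:ℝ) ^ (-σ)) p := by
          refine Finset.sum_congr rfl fun p hp => ?_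
          rw [Set.indicator_of_mem (show p ∈ {q : ℕ | Nat.Prime q}
            from Nat.prime_of_mem_primesBelow hp) (fun n => (n:ℝ) ^ (-σ))]
          exact hf p
        rw [heq2]
        refine Summable.sum_le_tsum _ (fun n _ => Set.indicator_nonneg (fun m _ => Real.rpow_nonneg (Nat.cast_nonneg m) _) n) ?_
        exact hsumf.indicator _
      linarith
    · intro p hp
      have := (hfple p hp).2
      have h0 : (0:ℝ) < 1 - f p := by linarith
      positivity
  have hlogSig0 : Real.log Sig0 ≤ 2 * primeG s := by
    have h1 : Real.log Sig0 ≤ Real.log (∑' m : (Nat.smoothNumbers (N+1)), f m) :=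
      Real.log_le_log hSig0_pos hsub
    rw [hEuler] at h1
    exact h1.trans hlogprod
  -- combine
  have hlb : Real.log (1/s) - 1 - Real.log 2 ≤ Real.log Sig0 := by
    have h1 : Real.log ((Real.exp 1)⁻¹ * (1/(2*s))) ≤ Real.log Sig0 :=
      Real.log_le_log (by positivity) hSig0_lb
    have h2 : Real.log ((Real.exp 1)⁻¹ * (1/(2*s)))
        = -1 + (Real.log (1/s) - Real.log 2) := by
      rw [Real.log_mul (by positivity) (by positivity), Real.log_inv, Real.log_exp]
      congr 1
      rw [show (1:ℝ)/(2*s) = (1/s)/2 by ring, Real.log_div (by positivity) (by norm_num)]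
    rw [h2] at h1
    linarith
  have hlog2 : Real.log 2 ≤ 1 := by
    have := Real.log_two_lt_d9
    linarith
  linarith

lemma sum_rpow_neg_half_le (K : ℕ) :
    ∑ n ∈ Finset.range (K + 1), ((n : ℝ) ^ (-(1/2 : ℝ))) ≤ 2 * Real.sqrt K := by
  induction K with
  | zero => simp [Real.zero_rpow]
  | succ K ih =>
      rw [Finset.sum_range_succ]
      have hb : Real.sqrt (K + 1) > 0 := Real.sqrt_pos.2 (by positivity)
      have ha : Real.sqrt K ≥ 0 := Real.sqrt_nonneg _
      have hb2 : Real.sqrt (K+1) ^ 2 = (K:ℝ)+1 := Real.sq_sqrt (by positivity)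
      have ha2 : Real.sqrt K ^ 2 = (K:ℝ) := Real.sq_sqrt (by positivity)
      have hterm : ((K+1 : ℕ) : ℝ) ^ (-(1/2 : ℝ)) = (Real.sqrt (K+1))⁻¹ := by
        rw [Real.rpow_neg (by positivity), Real.sqrt_eq_rpow]
        push_cast
        ring_nf
      rw [hterm]
      have key : (Real.sqrt (K+1))⁻¹ ≤ 2 * Real.sqrt (K+1) - 2 * Real.sqrt K := by
        rw [inv_le_iff_one_le_mul₀ hb]
        have hab : Real.sqrt K * Real.sqrt (K+1) ≤ (K:ℝ) + 1/2 := by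
          nlinarith [sq_nonneg (Real.sqrt K * Real.sqrt (K+1)), sq_nonneg ((K:ℝ)), mul_nonneg ha hb.le]
        nlinarith
      push_cast
      push_cast at ih
      linarith

lemma key_sum_bound (s : ℝ) (hs : 0 < s) (a : ℝ) (ha : 0 < a) (x : ℝ)
    (t : Nat.Primes → ℝ)
    (ht : ∀ p : Nat.Primes, a * ((p : ℕ) : ℝ) ^ ((1 + 2*s)/2 : ℝ) ≤ t p)
    (c : Nat.Primes → Prop) [DecidablePred c] (F : Finset Nat.Primes) :
    ∑ p ∈ F, (if c p then (if t p < |x| then |x| else 0) else 0) * ((p : ℕ) : ℝ) ^ (-(1/2 + s))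
      ≤ 2 / a * x ^ 2 := by
  have hw_nonneg : ∀ p : Nat.Primes, (0:ℝ) ≤ ((p:ℕ):ℝ) ^ (-(1/2 + s)) :=
    fun p => Real.rpow_nonneg (Nat.cast_nonneg _) _
  have step1 : ∑ p ∈ F, (if c p then (if t p < |x| then |x| else 0) else 0) * ((p:ℕ):ℝ) ^ (-(1/2 + s))
      ≤ ∑ p ∈ F, (if t p < |x| then |x| else 0) * ((p:ℕ):ℝ) ^ (-(1/2 + s)) := by
    refine Finset.sum_le_sum fun p _ => ?_
    by_cases h : c p
    · rw [if_pos h]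
    · rw [if_neg h, zero_mul]
      have : (0:ℝ) ≤ (if t p < |x| then |x| else 0) := by positivity
      exact mul_nonneg this (hw_nonneg p)
  refine step1.trans ?_
  classical
  have step2 : ∑ p ∈ F, (if t p < |x| then |x| else 0) * ((p:ℕ):ℝ) ^ (-(1/2 + s))
      = ∑ p ∈ F.filter (fun p => t p < |x|), |x| * ((p:ℕ):ℝ) ^ (-(1/2 + s)) := by
    rw [Finset.sum_filter]
    refine Finset.sum_congr rfl fun p _ => ?_
    by_cases h : t p < |x| <;> simp [h]
  rw [step2]
  set K : ℕ := ⌊(|x|/a)^2⌋₊ with hK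
  have hxa : (0:ℝ) ≤ |x|/a := by positivity
  have hmem : ∀ p ∈ F.filter (fun p => t p < |x|), ((p:ℕ)) < K + 1 := by
    intro p hp
    rw [Finset.mem_filter] at hp
    have h1 : a * ((p:ℕ):ℝ) ^ ((1 + 2*s)/2 : ℝ) < |x| := lt_of_le_of_lt (ht p) hp.2
    have hp1 : (1:ℝ) ≤ ((p:ℕ):ℝ) := by exact_mod_cast p.prop.one_lt.le
    have h2 : ((p:ℕ):ℝ) ^ ((1:ℝ)/2) ≤ ((p:ℕ):ℝ) ^ ((1 + 2*s)/2 : ℝ) :=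
      Real.rpow_le_rpow_of_exponent_le hp1 (by linarith)
    have h3 : ((p:ℕ):ℝ) ^ ((1:ℝ)/2) < |x|/a := by
      rw [lt_div_iff₀ ha] at *
      calc ((p:ℕ):ℝ) ^ ((1:ℝ)/2) * a ≤ ((p:ℕ):ℝ) ^ ((1 + 2*s)/2 : ℝ) * a := by
            exact mul_le_mul_of_nonneg_right h2 ha.le
        _ < |x| := by rw [mul_comm]; exact h1
    have h4 : ((p:ℕ):ℝ) < (|x|/a)^2 := by
      have hsq : Real.sqrt ((p:ℕ):ℝ) < |x|/a := by
        rwa [Real.sqrt_eq_rpow]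
      have := Real.sq_sqrt (show (0:ℝ) ≤ ((p:ℕ):ℝ) from Nat.cast_nonneg _)
      nlinarith [Real.sqrt_nonneg (((p:ℕ)):ℝ)]
    have : ((p:ℕ):ℝ) ≤ (K:ℝ) := by
      rw [hK]
      exact_mod_cast Nat.le_floor (by exact_mod_cast h4.le)
    by_contra hcon
    push_neg at hcon
    have : (K:ℝ) + 1 ≤ ((p:ℕ):ℝ) := by exact_mod_cast hcon
    linarith
  have step3 : ∑ p ∈ F.filter (fun p => t p < |x|), |x| * ((p:ℕ):ℝ) ^ (-(1/2 + s))
      ≤ |x| * ∑ p ∈ F.filter (fun p => t p < |x|), ((p:ℕ):ℝ) ^ (-(1/2:ℝ)) := by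
    rw [Finset.mul_sum]
    refine Finset.sum_le_sum fun p hp => ?_
    have hp1 : (1:ℝ) ≤ ((p:ℕ):ℝ) := by exact_mod_cast p.prop.one_lt.le
    refine mul_le_mul_of_nonneg_left ?_ (abs_nonneg x)
    exact Real.rpow_le_rpow_of_exponent_le hp1 (by linarith)
  have step4 : ∑ p ∈ F.filter (fun p => t p < |x|), ((p:ℕ):ℝ) ^ (-(1/2:ℝ))
      ≤ ∑ n ∈ Finset.range (K+1), ((n:ℝ) ^ (-(1/2 : ℝ))) := by
    have hinj : Set.InjOn (fun p : Nat.Primes => (p:ℕ)) (F.filter (fun p => t p < |x|)) :=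
      fun p _ q _ h => Subtype.ext h
    rw [← Finset.sum_image (f := fun n : ℕ => (n:ℝ) ^ (-(1/2:ℝ))) (g := fun p : Nat.Primes => (p:ℕ)) (fun p hp q hq h => hinj hp hq h)]
    refine Finset.sum_le_sum_of_subset_of_nonneg ?_ (fun n _ _ => Real.rpow_nonneg (Nat.cast_nonneg n) _)
    intro n hn
    rw [Finset.mem_image] at hn
    obtain ⟨p, hp, rfl⟩ := hn
    rw [Finset.mem_range]
    exact hmem p hp
  have step5 : ∑ n ∈ Finset.range (K+1), ((n:ℝ) ^ (-(1/2 : ℝ))) ≤ 2 * (|x|/a) := by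
    refine (sum_rpow_neg_half_le K).trans ?_
    have h1 : Real.sqrt (K:ℝ) ≤ Real.sqrt ((|x|/a)^2) :=
      Real.sqrt_le_sqrt (Nat.floor_le (by positivity))
    rw [Real.sqrt_sq hxa] at h1
    linarith
  calc ∑ p ∈ F.filter (fun p => t p < |x|), |x| * ((p:ℕ):ℝ) ^ (-(1/2 + s))
      ≤ |x| * ∑ p ∈ F.filter (fun p => t p < |x|), ((p:ℕ):ℝ) ^ (-(1/2:ℝ)) := step3
    _ ≤ |x| * (2 * (|x|/a)) := by
        refine mul_le_mul_of_nonneg_left (step4.trans step5) (abs_nonneg x)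
    _ = 2 / a * x ^ 2 := by
        have habs : |x| ^ 2 = x ^ 2 := sq_abs x
        field_simp
        linarith

/-- Lemma 3, relation (4.2): for every `θ > 0` and `M(s) → ∞`,
`∑_{p ≥ M(s)+1} E[|η_p| 1_{A_{p,θ}(s)}] p^{-1/2-s} → 0` as `s → 0+`. -/
theorem truncated_expectation_sum_tendsto_zero {Ω : Type*} [MeasureSpace Ω]
    [IsProbabilityMeasure (ℙ : Measure Ω)]
    (η : ℕ → Ω → ℝ) (hmeas : ∀ i, Measurable (η i))
    (hindep : iIndepFun η ℙ)
    (hident : ∀ i, IdentDistrib (η i) (η 0) ℙ ℙ)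
    (hmean : ∫ ω, η 0 ω ∂(ℙ : Measure Ω) = 0)
    (hvar : ∫ ω, (η 0 ω) ^ 2 ∂(ℙ : Measure Ω) = 1)
    (θ : ℝ) (hθ : 0 < θ)
    (M : ℝ → ℕ) (hM : Tendsto M (nhdsWithin 0 (Set.Ioi 0)) atTop) :
    Tendsto (fun s : ℝ =>
        ∑' p : Nat.Primes,
          if M s + 1 ≤ (p : ℕ) then
            (∫ ω, (if thr θ s p < |η p ω| then |η p ω| else 0) ∂(ℙ : Measure Ω)) *
              ((p : ℕ) : ℝ) ^ (-(1 / 2 + s))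
          else 0)
      (nhdsWithin 0 (Set.Ioi 0)) (nhds 0) := by
  classical
  have hint : Integrable (fun ω => (η 0 ω) ^ 2) (ℙ : Measure Ω) := by
    by_contra h
    rw [MeasureTheory.integral_undef h] at hvar
    norm_num at hvar
  have hpsi_meas : ∀ t : ℝ, Measurable (fun x : ℝ => if t < |x| then |x| else 0) := by
    intro t
    exact Measurable.ite (measurableSet_lt measurable_const continuous_abs.measurable)
      continuous_abs.measurable measurable_const
  have hpsi_int : ∀ t : ℝ, Integrable (fun ω => if t < |η 0 ω| then |η 0 ω| else 0)
      (ℙ : Measure Ω) := by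
    intro t
    have hm : Measurable fun ω => if t < |η 0 ω| then |η 0 ω| else 0 :=
      (hpsi_meas t).comp (hmeas 0)
    refine Integrable.mono' ((integrable_const (1:ℝ)).add hint) hm.aestronglyMeasurable
      (Filter.Eventually.of_forall fun ω => ?_)
    simp only [Pi.add_apply]
    rw [Real.norm_eq_abs]
    by_cases h : t < |η 0 ω|
    · rw [if_pos h, abs_abs]
      nlinarith [sq_abs (η 0 ω), sq_nonneg (|η 0 ω| - 1)]
    · rw [if_neg h, abs_zero]
      positivity
  -- the comparison function
  set B : ℝ → ℝ := fun s =>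
    4 / θ * Real.sqrt ((Real.log (Real.log (1/s)))^3 / Real.log (1/s)) with hBdef
  have hL_tend : Tendsto (fun s : ℝ => Real.log (1/s)) (nhdsWithin 0 (Set.Ioi 0)) atTop := by
    have h1 : Tendsto (fun s : ℝ => 1/s) (nhdsWithin (0:ℝ) (Set.Ioi 0)) atTop := by
      simpa [one_div] using tendsto_inv_nhdsGT_zero
    exact Real.tendsto_log_atTop.comp h1
  have hphi : Tendsto (fun u : ℝ => (Real.log u)^3 / u) atTop (nhds 0) := by
    simpa using Real.tendsto_pow_log_div_mul_add_atTop 1 0 3 one_ne_zero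
  have hsq0 : Tendsto (fun y : ℝ => Real.sqrt y) (nhds 0) (nhds 0) := by
    have := Real.continuous_sqrt.tendsto 0
    rwa [Real.sqrt_zero] at this
  have hBlim : Tendsto B (nhdsWithin 0 (Set.Ioi 0)) (nhds 0) := by
    have h2 : Tendsto (fun s : ℝ =>
        Real.sqrt ((Real.log (Real.log (1/s)))^3 / Real.log (1/s)))
        (nhdsWithin 0 (Set.Ioi 0)) (nhds 0) := hsq0.comp (hphi.comp hL_tend)
    have h3 := h2.const_mul (4/θ)
    rw [mul_zero] at h3
    exact h3
  refine tendsto_of_tendsto_of_tendsto_of_le_of_le' tendsto_const_nhds hBlim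
    (Filter.Eventually.of_forall fun s => ?_) ?_
  · -- nonnegativity of the sum
    refine tsum_nonneg fun p => ?_
    by_cases h : M s + 1 ≤ (p : ℕ)
    · rw [if_pos h]
      refine mul_nonneg (integral_nonneg fun ω => ?_) (Real.rpow_nonneg (Nat.cast_nonneg _) _)
      simp only [Pi.zero_apply]
      by_cases h2 : thr θ s p < |η p ω|
      · rw [if_pos h2]; exact abs_nonneg _
      · rw [if_neg h2]
    · rw [if_neg h]
  · -- eventual upper bound by B
    have hmem : Set.Ioo (0:ℝ) (Real.exp (-(7:ℝ))) ∈ nhdsWithin (0:ℝ) (Set.Ioi 0) :=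
      Ioo_mem_nhdsGT_of_mem ⟨le_refl 0, Real.exp_pos _⟩
    filter_upwards [hmem] with s hs
    obtain ⟨hs1, hs2⟩ := hs
    set L := Real.log (1/s) with hLdef
    have hL7 : 7 ≤ L := by
      have h1 : Real.log s < -7 := by
        have := Real.log_lt_log hs1 hs2
        rwa [Real.log_exp] at this
      have h2 : L = -Real.log s := by rw [hLdef, one_div, Real.log_inv]
      linarith
    set LL := Real.log L with hLLdef
    set LLL := Real.log LL with hLLLdef
    have hLpos : 0 < L := by linarith
    have hLL1 : 1 < LL := by
      rw [hLLdef, Real.lt_log_iff_exp_lt hLpos]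
      have := Real.exp_one_lt_d9
      linarith
    have hLLpos : 0 < LL := by linarith
    have hLLLpos : 0 < LLL := Real.log_pos hLL1
    have hLLLle : LLL ≤ LL := Real.log_le_self hLLpos.le
    have hg : L / 4 ≤ primeG s := primeG_pos_ge s hs1 hL7
    have hgpos : 0 < primeG s := by linarith
    set g := primeG s with hgdef
    set a : ℝ := θ / LL * Real.sqrt (g / LLL) with hadef
    have hapos : 0 < a :=
      mul_pos (div_pos hθ hLLpos) (Real.sqrt_pos.2 (div_pos hgpos hLLLpos))
    have hthr_eq : ∀ p : Nat.Primes,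
        thr θ s p = a * ((p:ℕ):ℝ) ^ ((1 + 2*s)/2 : ℝ) := by
      intro p
      rw [thr, hadef]
      have h1 : ((p:ℕ):ℝ) ^ (1+2*s) * primeG s / Real.log (Real.log (Real.log (1/s)))
          = ((p:ℕ):ℝ) ^ (1+2*s) * (g / LLL) := by
        rw [hgdef, hLLLdef, hLLdef, hLdef]; ring
      rw [h1, Real.mul_rpow (Real.rpow_nonneg (Nat.cast_nonneg _) _) (by positivity),
        ← Real.rpow_mul (Nat.cast_nonneg _)]
      have h2 : (1+2*s) * ((1:ℝ)/2) = (1+2*s)/2 := by ring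
      rw [h2, Real.sqrt_eq_rpow, hLLdef, hLdef]
      ring
    -- bound the tsum
    have hSle : (∑' p : Nat.Primes,
          if M s + 1 ≤ (p : ℕ) then
            (∫ ω, (if thr θ s p < |η p ω| then |η p ω| else 0) ∂(ℙ : Measure Ω)) *
              ((p : ℕ) : ℝ) ^ (-(1 / 2 + s))
          else 0) ≤ 2 / a := by
      have h2a : (0:ℝ) ≤ 2 / a := by positivity
      refine tsum_le_of_sum_le' h2a fun F => ?_
      -- rewrite the summand as an integral
      set gp : Nat.Primes → Ω → ℝ := fun p ω =>
        (if M s + 1 ≤ (p:ℕ) then (if thr θ s p < |η 0 ω| then |η 0 ω| else 0) else 0) *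
          ((p:ℕ):ℝ) ^ (-(1/2 + s)) with hgpdef
      have hgp_int : ∀ p : Nat.Primes, Integrable (gp p) (ℙ : Measure Ω) := by
        intro p
        by_cases h : M s + 1 ≤ (p:ℕ)
        · simp only [hgpdef, if_pos h]
          exact (hpsi_int _).mul_const _
        · simp only [hgpdef, if_neg h, zero_mul]
          exact integrable_zero _ _ _
      have hterm_eq : ∀ p ∈ F,
          (if M s + 1 ≤ (p : ℕ) then
            (∫ ω, (if thr θ s p < |η p ω| then |η p ω| else 0) ∂(ℙ : Measure Ω)) *
              ((p : ℕ) : ℝ) ^ (-(1 / 2 + s))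
          else 0) = ∫ ω, gp p ω ∂(ℙ : Measure Ω) := by
        intro p _
        by_cases h : M s + 1 ≤ (p:ℕ)
        · rw [if_pos h]
          have hid : (∫ ω, (if thr θ s p < |η p ω| then |η p ω| else 0) ∂(ℙ : Measure Ω))
              = ∫ ω, (if thr θ s p < |η 0 ω| then |η 0 ω| else 0) ∂(ℙ : Measure Ω) := by
            exact ((hident (p:ℕ)).comp (hpsi_meas (thr θ s p))).integral_eq
          rw [hid]
          simp only [hgpdef, if_pos h]
          exact (MeasureTheory.integral_mul_const _ _).symm
        · rw [if_neg h]
          simp only [hgpdef, if_neg h, zero_mul, integral_zero]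
      rw [Finset.sum_congr rfl hterm_eq,
        ← integral_finset_sum F fun p _ => hgp_int p]
      have hptwise : ∀ ω, ∑ p ∈ F, gp p ω ≤ 2 / a * (η 0 ω) ^ 2 := by
        intro ω
        exact key_sum_bound s hs1 a hapos (η 0 ω) (fun p => thr θ s p)
          (fun p => (hthr_eq p).symm.le) (fun p => M s + 1 ≤ (p:ℕ)) F
      calc (∫ ω, ∑ p ∈ F, gp p ω ∂(ℙ : Measure Ω))
          ≤ ∫ ω, 2 / a * (η 0 ω) ^ 2 ∂(ℙ : Measure Ω) := by
            exact integral_mono (integrable_finset_sum F fun p _ => hgp_int p)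
              (hint.const_mul _) hptwise
        _ = 2 / a := by
            rw [MeasureTheory.integral_const_mul, hvar, mul_one]
    refine hSle.trans ?_
    -- finally 2/a ≤ B s
    have hsq : Real.sqrt (g / LLL) ^ 2 = g / LLL := Real.sq_sqrt (by positivity)
    have ha2 : a ^ 2 = θ^2 * g / (LL^2 * LLL) := by
      rw [hadef, mul_pow, div_pow, hsq]
      field_simp
    have hkey : (θ/4 * (2/a))^2 ≤ LL^3 / L := by
      have he1 : (θ/4 * (2/a))^2 = θ^2 / (4 * a^2) := by
        field_simp
        ring
      rw [he1, ha2]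
      have hne1 : LL ≠ 0 := hLLpos.ne'
      have hne2 : LLL ≠ 0 := hLLLpos.ne'
      have hne3 : g ≠ 0 := hgpos.ne'
      have hne4 : θ ≠ 0 := hθ.ne'
      have he2 : θ^2 / (4 * (θ^2 * g / (LL^2 * LLL))) = LL^2 * LLL / (4 * g) := by
        field_simp
      rw [he2, div_le_div_iff₀ (by positivity) hLpos]
      nlinarith [mul_le_mul hLLLle (show L ≤ 4*g by linarith) hLpos.le hLLpos.le,
        sq_nonneg LL, hLLpos.le]
    have hroot : θ/4 * (2/a) ≤ Real.sqrt (LL^3 / L) := by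
      have h0 : (0:ℝ) ≤ θ/4 * (2/a) := by positivity
      have h1 := Real.sqrt_le_sqrt hkey
      rwa [Real.sqrt_sq h0] at h1
    have hBs : B s = 4/θ * Real.sqrt (LL^3 / L) := by
      simp only [hBdef]
      rw [hLLdef, hLdef]
    rw [hBs]
    calc 2/a = 4/θ * (θ/4 * (2/a)) := by field_simp
      _ ≤ 4/θ * Real.sqrt (LL^3 / L) := mul_le_mul_of_nonneg_left hroot (by positivity)
end

section
/- Let η₁, η₂, … be i.i.d. with E[η] = 0 and E[η²] = 1, indexed by primes, and define the truncated events A_{p,θ}(s) as above. Then for every θ > 0 and every M with M(s) → ∞, almost surely ∑_{p prime, p ≥ M(s)+1} |η_p| 1_{A_{p,θ}(s)} p^{-1/2-s} = 0 for all sufficiently small s > 0; in particular the limit as s → 0+ is 0 a.s. -/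
open MeasureTheory ProbabilityTheory Filter

noncomputable def fσ (σ : ℝ) (hσ : 1 < σ) : ℕ →*₀ ℝ where
  toFun n := (n : ℝ) ^ (-σ)
  map_zero' := by
    simp only [Nat.cast_zero]
    rw [Real.zero_rpow]; intro h; nlinarith [neg_eq_zero.mp h]
  map_one' := by simp
  map_mul' m n := by
    push_cast
    exact Real.mul_rpow (Nat.cast_nonneg m) (Nat.cast_nonneg n)

lemma fσ_summable (σ : ℝ) (hσ : 1 < σ) : Summable (fun n : ℕ => ‖fσ σ hσ n‖) := by
  have : Summable (fun n : ℕ => (n : ℝ) ^ (-σ)) := by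
    rw [Real.summable_nat_rpow]; linarith
  refine this.congr fun n => ?_
  simp [fσ, Real.norm_eq_abs, abs_of_nonneg (Real.rpow_nonneg (Nat.cast_nonneg n) _)]

lemma inv_one_sub_le_exp {x : ℝ} (h0 : 0 ≤ x) (h2 : x ≤ 1/2) :
    (1 - x)⁻¹ ≤ Real.exp (x + 2 * x ^ 2) := by
  have hx : 0 < 1 - x := by linarith
  rw [inv_le_iff_one_le_mul₀ hx]  -- maybe wrong name
  nlinarith [Real.add_one_le_exp (x + 2 * x ^ 2), sq_nonneg x]

lemma sum_inv_succ_sq_le (n : ℕ) :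
    ∑ k ∈ Finset.range n, (1 : ℝ) / ((k : ℝ) + 1) ^ 2 ≤ 2 - 2 / ((n : ℝ) + 1) := by
  induction n with
  | zero => norm_num
  | succ m ih =>
    rw [Finset.sum_range_succ]
    have h1 : ((m:ℝ)+1) > 0 := by positivity
    have h2 : ((m:ℝ)+2) > 0 := by positivity
    have key : (1:ℝ) / ((m:ℝ)+1)^2 ≤ 2/((m:ℝ)+1) - 2/((m:ℝ)+2) := by
      rw [div_sub_div _ _ (ne_of_gt h1) (ne_of_gt h2)]
      rw [div_le_div_iff₀ (by positivity) (by positivity)]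
      nlinarith
    have e : ((((m+1):ℕ)):ℝ)+1 = (m:ℝ)+2 := by push_cast; ring
    rw [e]
    linarith

lemma sum_inv_sq_le (n : ℕ) :
    ∑ k ∈ Finset.range n, (1 : ℝ) / (k : ℝ) ^ 2 ≤ 2 := by
  cases n with
  | zero => simp
  | succ m =>
    rw [Finset.sum_range_succ']
    have hthis := sum_inv_succ_sq_le m
    have h : ∀ k ∈ Finset.range m, (1:ℝ)/(((k+1 : ℕ)):ℝ)^2 = (1:ℝ)/((k:ℝ)+1)^2 := by
      intro k _; push_cast; ring_nf
    rw [Finset.sum_congr rfl h]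
    have e0 : (1:ℝ)/(((0:ℕ)):ℝ)^2 = 0 := by norm_num
    rw [e0, add_zero]
    have hp : (0:ℝ) ≤ 2 / ((m:ℝ)+1) := by positivity
    linarith

noncomputable def Pσ (σ : ℝ) : ℝ := ∑' p : Nat.Primes, ((p : ℕ) : ℝ) ^ (-σ)

lemma P_summable {σ : ℝ} (hσ : 1 < σ) :
    Summable (fun p : Nat.Primes => ((p : ℕ) : ℝ) ^ (-σ)) :=
  Nat.Primes.summable_rpow.mpr (by linarith)

lemma sum_primesBelow_le {σ : ℝ} (hσ : 1 < σ) (n : ℕ) :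
    ∑ p ∈ n.primesBelow, ((p : ℕ) : ℝ) ^ (-σ) ≤ Pσ σ := by
  classical
  have hsub : Pσ σ = ∑' m : ℕ, Set.indicator {p : ℕ | p.Prime} (fun m => ((m:ℕ):ℝ) ^ (-σ)) m := by
    rw [Pσ, ← tsum_subtype]; rfl
  rw [hsub]
  have hsum : Summable (Set.indicator {p : ℕ | p.Prime} (fun m => ((m:ℕ):ℝ) ^ (-σ))) := by
    have : Summable (fun n : ℕ => (n : ℝ) ^ (-σ)) := by
      rw [Real.summable_nat_rpow]; linarith
    exact this.indicator _
  have heq : ∀ p ∈ n.primesBelow,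
      ((p : ℕ) : ℝ) ^ (-σ) = Set.indicator {p : ℕ | p.Prime} (fun m => ((m:ℕ):ℝ) ^ (-σ)) p := by
    intro p hp
    rw [Set.indicator_of_mem (show p ∈ {p : ℕ | p.Prime} from Nat.prime_of_mem_primesBelow hp)]
  rw [Finset.sum_congr rfl heq]
  exact Summable.sum_le_tsum _ (fun m _ => Set.indicator_nonneg
    (fun a _ => Real.rpow_nonneg (Nat.cast_nonneg a) _) m) hsum

noncomputable def Zσ (σ : ℝ) : ℝ := ∑' n : ℕ, (n : ℝ) ^ (-σ)

lemma Z_le_exp {σ : ℝ} (hσ : 1 < σ) : Zσ σ ≤ Real.exp (Pσ σ + 4) := by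
  have heul := EulerProduct.eulerProduct_completely_multiplicative (fσ_summable σ hσ)
  have hZ : Zσ σ = ∑' n : ℕ, fσ σ hσ n := rfl
  rw [hZ]
  refine le_of_tendsto heul (Filter.Eventually.of_forall fun n => ?_)
  -- bound the partial product
  have hx : ∀ p ∈ n.primesBelow, 0 ≤ ((p:ℕ):ℝ) ^ (-σ) ∧ ((p:ℕ):ℝ) ^ (-σ) ≤ 1/2 ∧
      ((p:ℕ):ℝ) ^ (-σ) ≤ 1/(p:ℝ) := by
    intro p hp
    have hp2 : 2 ≤ p := (Nat.prime_of_mem_primesBelow hp).two_le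
    have h1p : (1:ℝ) ≤ (p:ℝ) := by exact_mod_cast Nat.one_le_of_lt hp2
    have hle : ((p:ℕ):ℝ) ^ (-σ) ≤ ((p:ℕ):ℝ) ^ (-1:ℝ) :=
      Real.rpow_le_rpow_of_exponent_le h1p (by linarith)
    rw [Real.rpow_neg_one] at hle
    have : ((p:ℝ))⁻¹ ≤ 1/2 := by
      rw [one_div]
      exact inv_anti₀ (by norm_num) (by exact_mod_cast hp2)
    refine ⟨Real.rpow_nonneg (Nat.cast_nonneg p) _, ?_, by rwa [one_div]⟩
    calc ((p:ℕ):ℝ) ^ (-σ) ≤ (p:ℝ)⁻¹ := hle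
      _ ≤ 1/2 := this
  calc ∏ p ∈ n.primesBelow, (1 - fσ σ hσ p)⁻¹
      ≤ ∏ p ∈ n.primesBelow, Real.exp (((p:ℕ):ℝ)^(-σ) + 2*(((p:ℕ):ℝ)^(-σ))^2) := by
        refine Finset.prod_le_prod (fun p hp => ?_) (fun p hp => ?_)
        · have := hx p hp
          have h2 : (0:ℝ) < 1 - ((p:ℕ):ℝ)^(-σ) := by
            have := this.2.1; linarith
          show (0:ℝ) ≤ (1 - ((p:ℕ):ℝ)^(-σ))⁻¹
          positivity
        · exact inv_one_sub_le_exp (hx p hp).1 (hx p hp).2.1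
    _ = Real.exp (∑ p ∈ n.primesBelow, (((p:ℕ):ℝ)^(-σ) + 2*(((p:ℕ):ℝ)^(-σ))^2)) :=
        (Real.exp_sum _ _).symm
    _ ≤ Real.exp (Pσ σ + 4) := by
        apply Real.exp_le_exp.mpr
        rw [Finset.sum_add_distrib]
        have hA : ∑ p ∈ n.primesBelow, ((p:ℕ):ℝ)^(-σ) ≤ Pσ σ := sum_primesBelow_le hσ n
        have hB : ∑ p ∈ n.primesBelow, 2*(((p:ℕ):ℝ)^(-σ))^2 ≤ 4 := by
          have hstep : ∑ p ∈ n.primesBelow, 2*(((p:ℕ):ℝ)^(-σ))^2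
              ≤ ∑ p ∈ n.primesBelow, 2*((1:ℝ)/(p:ℝ)^2) := by
            refine Finset.sum_le_sum fun p hp => ?_
            have h := hx p hp
            have hsq : (((p:ℕ):ℝ)^(-σ))^2 ≤ (1/(p:ℝ))^2 := by
              apply sq_le_sq' <;> nlinarith [h.1, h.2.2]
            rw [div_pow, one_pow] at hsq
            linarith
          have hsub : ∑ p ∈ n.primesBelow, 2*((1:ℝ)/(p:ℝ)^2)
              ≤ ∑ k ∈ Finset.range n, 2*((1:ℝ)/(k:ℝ)^2) := by
            refine Finset.sum_le_sum_of_subset_of_nonneg ?_ (fun k _ _ => by positivity)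
            intro p hp
            exact Finset.mem_range.mpr (Nat.lt_of_mem_primesBelow hp)
          have := sum_inv_sq_le n
          calc ∑ p ∈ n.primesBelow, 2*(((p:ℕ):ℝ)^(-σ))^2
              ≤ ∑ p ∈ n.primesBelow, 2*((1:ℝ)/(p:ℝ)^2) := hstep
            _ ≤ 2 * ∑ k ∈ Finset.range n, (1:ℝ)/(k:ℝ)^2 := by
                rw [Finset.mul_sum]
                exact Finset.sum_le_sum_of_subset_of_nonneg
                  (fun p hp => Finset.mem_range.mpr (Nat.lt_of_mem_primesBelow hp))
                  (fun k _ _ => by positivity)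
            _ ≤ 2 * 2 := by linarith
            _ = 4 := by norm_num
        linarith

lemma Z_ge {σ : ℝ} (hσ : 1 < σ) (hσ2 : σ ≤ 3/2) :
    (σ - 1)⁻¹ / (2 * Real.exp 1) ≤ Zσ σ := by
  set t : ℝ := (σ - 1)⁻¹ with ht
  have hσ1 : 0 < σ - 1 := by linarith
  have htpos : 0 < t := by positivity
  set N : ℕ := ⌈Real.exp t⌉₊ with hN
  have hexpt : Real.exp t ≤ N := Nat.le_ceil _
  have hNle : (N : ℝ) ≤ 2 * Real.exp t := by
    have h1 : (N:ℝ) ≤ Real.exp t + 1 := le_of_lt (Nat.ceil_lt_add_one (Real.exp_pos t).le)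
    have : (1:ℝ) ≤ Real.exp t := by
      rw [← Real.exp_zero]; exact Real.exp_le_exp.mpr htpos.le
    linarith
  have hNpos : 0 < N := by
    rw [hN, Nat.lt_ceil]; push_cast; exact Real.exp_pos t
  -- Z ≥ ∑_{k ∈ range N} (k+1)^{-σ}
  have hsummable : Summable (fun n : ℕ => (n : ℝ) ^ (-σ)) := by
    rw [Real.summable_nat_rpow]; linarith
  have hpart : ∑ n ∈ Finset.range (N+1), (n : ℝ) ^ (-σ) ≤ Zσ σ :=
    Summable.sum_le_tsum _ (fun m _ => Real.rpow_nonneg (Nat.cast_nonneg m) _) hsummable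
  rw [Finset.sum_range_succ'] at hpart
  have hzero : ((0:ℕ) : ℝ) ^ (-σ) = 0 := by
    simp only [Nat.cast_zero]; exact Real.zero_rpow (by intro h; nlinarith [neg_eq_zero.mp h])
  rw [hzero, add_zero] at hpart
  -- each term ≥ (k+1)⁻¹ * N^{-(σ-1)}
  have hterm : ∀ k ∈ Finset.range N, ((k:ℝ)+1)⁻¹ * ((N:ℝ)) ^ (-(σ-1)) ≤ (((k+1:ℕ)):ℝ) ^ (-σ) := by
    intro k hk
    have hk1 : (0:ℝ) < (k:ℝ) + 1 := by positivity
    have hkN : (k:ℝ) + 1 ≤ (N:ℝ) := by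
      have := Finset.mem_range.mp hk
      exact_mod_cast Nat.succ_le_of_lt this
    have hsplit : (((k+1:ℕ)):ℝ) ^ (-σ) = ((k:ℝ)+1) ^ (-1:ℝ) * ((k:ℝ)+1) ^ (-(σ-1)) := by
      push_cast
      rw [← Real.rpow_add hk1]
      congr 1
      ring
    rw [hsplit, Real.rpow_neg_one]
    have hmono : ((N:ℝ)) ^ (-(σ-1)) ≤ ((k:ℝ)+1) ^ (-(σ-1)) :=
      Real.rpow_le_rpow_of_nonpos hk1 hkN (by linarith)
    exact mul_le_mul_of_nonneg_left hmono (by positivity)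
  have hsum2 : ∑ k ∈ Finset.range N, ((k:ℝ)+1)⁻¹ * ((N:ℝ)) ^ (-(σ-1))
      ≤ ∑ k ∈ Finset.range N, (((k+1:ℕ)):ℝ) ^ (-σ) := Finset.sum_le_sum hterm
  rw [← Finset.sum_mul] at hsum2
  -- harmonic lower bound
  have hharm : t ≤ ∑ k ∈ Finset.range N, ((k:ℝ)+1)⁻¹ := by
    have h1 := log_add_one_le_harmonic N
    have h2 : ∀ n : ℕ, (harmonic n : ℝ) = ∑ k ∈ Finset.range n, ((k:ℝ)+1)⁻¹ := by
      intro n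
      induction n with
      | zero => simp
      | succ m ihm => rw [harmonic_succ, Finset.sum_range_succ]; push_cast; rw [ihm]
    have h2 := h2 N
    have h3 : t ≤ Real.log ((N:ℝ)+1) := by
      have : Real.exp t ≤ (N:ℝ)+1 := by linarith
      calc t = Real.log (Real.exp t) := (Real.log_exp t).symm
        _ ≤ Real.log ((N:ℝ)+1) := Real.log_le_log (Real.exp_pos t) this
    push_cast at h1
    linarith [h3, h1, h2.symm.le]
  have hpow : (2 * Real.exp 1)⁻¹ ≤ ((N:ℝ)) ^ (-(σ-1)) := by
    have hN0 : (0:ℝ) < (N:ℝ) := by exact_mod_cast hNpos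
    have h1 : ((N:ℝ)) ^ (-(σ-1)) ≥ (2 * Real.exp t) ^ (-(σ-1)) :=
      Real.rpow_le_rpow_of_nonpos hN0 hNle (by linarith)
    have h2 : (2 * Real.exp t) ^ (-(σ-1)) = 2 ^ (-(σ-1)) * (Real.exp t) ^ (-(σ-1)) :=
      Real.mul_rpow (by norm_num) (Real.exp_pos t).le
    have h3 : (Real.exp t) ^ (-(σ-1)) = Real.exp (-1) := by
      rw [← Real.exp_mul]
      congr 1
      rw [ht]
      field_simp
    have h4 : (2:ℝ) ^ (-(σ-1)) ≥ 2 ^ (-1:ℝ) :=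
      Real.rpow_le_rpow_of_exponent_le (by norm_num) (by linarith)
    have h5 : (2:ℝ) ^ (-1:ℝ) = 2⁻¹ := Real.rpow_neg_one 2
    have h6 : Real.exp (-1) = (Real.exp 1)⁻¹ := Real.exp_neg 1
    rw [h2, h3] at h1
    rw [mul_inv]
    calc (2:ℝ)⁻¹ * (Real.exp 1)⁻¹ ≤ 2 ^ (-(σ-1)) * Real.exp (-1) := by
          rw [h6]
          exact mul_le_mul_of_nonneg_right (by rw [← h5]; exact h4) (by positivity)
      _ ≤ ((N:ℝ)) ^ (-(σ-1)) := h1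
  -- combine
  have hfinal : t * (2 * Real.exp 1)⁻¹ ≤ (∑ k ∈ Finset.range N, ((k:ℝ)+1)⁻¹) * ((N:ℝ)) ^ (-(σ-1)) := by
    apply mul_le_mul hharm hpow (by positivity)
    have : (0:ℝ) < ∑ k ∈ Finset.range N, ((k:ℝ)+1)⁻¹ := lt_of_lt_of_le htpos hharm
    linarith
  rw [div_eq_mul_inv]
  linarith [hfinal, hsum2, hpart]

lemma primeG_eq (s : ℝ) : primeG s = Pσ (1 + 2 * s) := rfl

lemma primeG_pointwise {s : ℝ} (hs : 0 < s) (hs4 : s ≤ 1/4) :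
    Real.log (1/s) - Real.log 2 - Real.log (2 * Real.exp 1) - 4 ≤ primeG s := by
  set σ : ℝ := 1 + 2 * s with hσdef
  have hσ : 1 < σ := by rw [hσdef]; linarith
  have hσ2 : σ ≤ 3/2 := by rw [hσdef]; linarith
  have h1 := Z_ge hσ hσ2
  have h2 := Z_le_exp hσ
  have hZpos : 0 < (σ - 1)⁻¹ / (2 * Real.exp 1) := by
    have : 0 < σ - 1 := by linarith
    positivity
  have hlog : Real.log ((σ - 1)⁻¹ / (2 * Real.exp 1)) ≤ Pσ σ + 4 := by
    calc Real.log ((σ - 1)⁻¹ / (2 * Real.exp 1)) ≤ Real.log (Zσ σ) :=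
          Real.log_le_log hZpos (le_trans h1 le_rfl)
      _ ≤ Real.log (Real.exp (Pσ σ + 4)) := Real.log_le_log (lt_of_lt_of_le hZpos h1) h2
      _ = Pσ σ + 4 := Real.log_exp _
  have hσ1 : σ - 1 = 2 * s := by rw [hσdef]; ring
  have hexpand : Real.log ((σ - 1)⁻¹ / (2 * Real.exp 1)) =
      Real.log (1/s) - Real.log 2 - Real.log (2 * Real.exp 1) := by
    have ha : (σ - 1)⁻¹ ≠ 0 := by
      have : (0:ℝ) < σ - 1 := by linarith
      positivity
    have hb : 2 * Real.exp 1 ≠ 0 := by positivity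
    rw [Real.log_div ha hb, Real.log_inv, hσ1,
      Real.log_mul (by norm_num) (ne_of_gt hs), one_div, Real.log_inv]
    ring
  rw [hexpand] at hlog
  rw [primeG_eq]
  linarith

lemma primeG_lower : ∀ᶠ s : ℝ in nhdsWithin 0 (Set.Ioi 0),
    (1/2) * Real.log (1/s) ≤ primeG s := by
  have hL1 : Tendsto (fun s : ℝ => Real.log (1/s)) (nhdsWithin 0 (Set.Ioi 0)) atTop := by
    have : Tendsto (fun s : ℝ => s⁻¹) (nhdsWithin 0 (Set.Ioi 0)) atTop := tendsto_inv_nhdsGT_zero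
    exact Real.tendsto_log_atTop.comp (this.congr fun s => (one_div s).symm) |>.congr fun s => rfl
  have hbig := hL1.eventually_ge_atTop (2 * (Real.log 2 + Real.log (2 * Real.exp 1) + 4))
  have hsmall : ∀ᶠ s : ℝ in nhdsWithin 0 (Set.Ioi 0), s ∈ Set.Ioc (0:ℝ) (1/4) := by
    apply Ioc_mem_nhdsGT_of_mem
    constructor
    · exact le_refl 0
    · norm_num
  filter_upwards [hbig, hsmall] with s h1 h2
  have := primeG_pointwise h2.1 h2.2
  linarith

lemma tendsto_aux : Tendsto (fun y : ℝ => y / (Real.log y ^ 2 * Real.log (Real.log y)))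
    atTop atTop := by
  have h3 : Tendsto (fun x : ℝ => Real.log x ^ 3 / x) atTop (nhds 0) := by
    have := Real.tendsto_pow_log_div_mul_add_atTop 1 0 3 one_ne_zero
    simpa using this
  have hev : ∀ᶠ x : ℝ in atTop, 1 < Real.log x ∧ 0 < Real.log (Real.log x) ∧ 0 < x := by
    have h1 : Tendsto (fun x : ℝ => Real.log x) atTop atTop := Real.tendsto_log_atTop
    have h2 : Tendsto (fun x : ℝ => Real.log (Real.log x)) atTop atTop :=
      Real.tendsto_log_atTop.comp h1
    filter_upwards [h1.eventually_gt_atTop 1, h2.eventually_gt_atTop 0,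
      eventually_gt_atTop 0] with x hx1 hx2 hx3
    exact ⟨hx1, hx2, hx3⟩
  have hpos : ∀ᶠ x : ℝ in atTop, Real.log x ^ 3 / x ∈ Set.Ioi (0:ℝ) := by
    filter_upwards [hev] with x ⟨h1, _, h3⟩
    have : (0:ℝ) < Real.log x ^ 3 := by positivity
    exact div_pos this h3
  have hto : Tendsto (fun x : ℝ => Real.log x ^ 3 / x) atTop (nhdsWithin 0 (Set.Ioi 0)) :=
    tendsto_nhdsWithin_of_tendsto_nhds_of_eventually_within _ h3 hpos
  have hinv : Tendsto (fun x : ℝ => x / Real.log x ^ 3) atTop atTop := by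
    have := hto.inv_tendsto_nhdsGT_zero
    refine this.congr fun x => ?_
    simp [Pi.inv_apply, inv_div]
  refine tendsto_atTop_mono' atTop ?_ hinv
  filter_upwards [hev] with x ⟨h1, h2, h3⟩
  have hlog : Real.log (Real.log x) ≤ Real.log x := by
    have := Real.log_le_sub_one_of_pos (show (0:ℝ) < Real.log x by linarith)
    linarith
  have hb : (0:ℝ) < Real.log x ^ 2 * Real.log (Real.log x) := by positivity
  have hbc : Real.log x ^ 2 * Real.log (Real.log x) ≤ Real.log x ^ 3 := by
    have h0 : (0:ℝ) ≤ Real.log x ^ 2 := sq_nonneg _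
    calc Real.log x ^ 2 * Real.log (Real.log x) ≤ Real.log x ^ 2 * Real.log x :=
          mul_le_mul_of_nonneg_left hlog h0
      _ = Real.log x ^ 3 := by ring
  exact div_le_div_of_nonneg_left h3.le hb hbc

lemma hL1_tendsto : Tendsto (fun s : ℝ => Real.log (1/s)) (nhdsWithin 0 (Set.Ioi 0)) atTop := by
  have : Tendsto (fun s : ℝ => s⁻¹) (nhdsWithin 0 (Set.Ioi 0)) atTop := tendsto_inv_nhdsGT_zero
  exact Real.tendsto_log_atTop.comp (this.congr fun s => (one_div s).symm)

lemma tendsto_q : Tendsto (fun s : ℝ => primeG s /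
    (Real.log (Real.log (1/s)) ^ 2 * Real.log (Real.log (Real.log (1/s)))))
    (nhdsWithin 0 (Set.Ioi 0)) atTop := by
  have hcomp : Tendsto (fun s : ℝ => Real.log (1/s) /
      (Real.log (Real.log (1/s)) ^ 2 * Real.log (Real.log (Real.log (1/s)))))
      (nhdsWithin 0 (Set.Ioi 0)) atTop := tendsto_aux.comp hL1_tendsto
  have hhalf : Tendsto (fun s : ℝ => (1/2) * (Real.log (1/s) /
      (Real.log (Real.log (1/s)) ^ 2 * Real.log (Real.log (Real.log (1/s))))))
      (nhdsWithin 0 (Set.Ioi 0)) atTop := hcomp.const_mul_atTop (by norm_num)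
  refine tendsto_atTop_mono' _ ?_ hhalf
  have hL2 := Real.tendsto_log_atTop.comp hL1_tendsto
  have hL3 := Real.tendsto_log_atTop.comp hL2
  filter_upwards [primeG_lower, hL2.eventually_gt_atTop 1, hL3.eventually_gt_atTop 0]
    with s hg hL2s hL3s
  have hD : (0:ℝ) < Real.log (Real.log (1/s)) ^ 2 * Real.log (Real.log (Real.log (1/s))) := by
    have h2 : (0:ℝ) < Real.log (Real.log (1/s)) := by
      have : (1:ℝ) < Real.log (Real.log (1/s)) := hL2s
      linarith
    have h3 : (0:ℝ) < Real.log (Real.log (Real.log (1/s))) := hL3s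
    positivity
  rw [show (1/2) * (Real.log (1/s) /
      (Real.log (Real.log (1/s)) ^ 2 * Real.log (Real.log (Real.log (1/s))))) =
      ((1/2) * Real.log (1/s)) /
      (Real.log (Real.log (1/s)) ^ 2 * Real.log (Real.log (Real.log (1/s)))) from by ring]
  exact div_le_div_of_nonneg_right hg hD.le

lemma eventually_thr (θ C : ℝ) (hθ : 0 < θ) (hC : 0 ≤ C) :
    ∀ᶠ s : ℝ in nhdsWithin 0 (Set.Ioi 0), ∀ p : ℕ, p.Prime →
      C * Real.sqrt p ≤ thr θ s p := by
  have hL2 := Real.tendsto_log_atTop.comp hL1_tendsto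
  have hL3 := Real.tendsto_log_atTop.comp hL2
  filter_upwards [tendsto_q.eventually_ge_atTop ((C/θ)^2), hL2.eventually_gt_atTop 1,
    hL3.eventually_gt_atTop 0, primeG_lower, hL1_tendsto.eventually_gt_atTop 0,
    self_mem_nhdsWithin] with s hq hL2s hL3s hgl hL1s hs
  intro p hp
  simp only [Function.comp_apply] at hL2s hL3s
  have hs0 : (0:ℝ) < s := hs
  set L2 := Real.log (Real.log (1/s)) with hL2def
  set L3 := Real.log (Real.log (Real.log (1/s))) with hL3def
  set g := primeG s with hgdef
  have hL2pos : (0:ℝ) < L2 := by linarith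
  have hgpos : (0:ℝ) ≤ g := by
    have : (0:ℝ) ≤ (1/2) * Real.log (1/s) := by positivity
    linarith
  have hp1 : (1:ℝ) ≤ (p:ℝ) := by exact_mod_cast hp.one_lt.le
  have hp0 : (0:ℝ) ≤ (p:ℝ) := by linarith
  -- θ/L2 * √(g/L3) ≥ C
  have hkey : C ≤ θ / L2 * Real.sqrt (g / L3) := by
    have h1 : Real.sqrt ((C/θ)^2) ≤ Real.sqrt (g / (L2^2 * L3)) := Real.sqrt_le_sqrt hq
    rw [Real.sqrt_sq (by positivity)] at h1
    have h2 : Real.sqrt (g / (L2^2 * L3)) = Real.sqrt (g / L3) / L2 := by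
      rw [show g / (L2^2 * L3) = (g / L3) * (L2^2)⁻¹ by
        rw [mul_comm (L2^2) L3, ← div_div, div_eq_mul_inv]]
      rw [Real.sqrt_mul (by positivity) _, Real.sqrt_inv, Real.sqrt_sq hL2pos.le]
      ring
    rw [h2] at h1
    have := mul_le_mul_of_nonneg_left h1 hθ.le
    rw [show θ * (C/θ) = C by field_simp] at this
    calc C ≤ θ * (Real.sqrt (g / L3) / L2) := this
      _ = θ / L2 * Real.sqrt (g / L3) := by ring
  -- p^{1+2s} * g / L3 ≥ p * g / L3
  have hXY : (p:ℝ) * g / L3 ≤ (p:ℝ) ^ (1 + 2*s) * g / L3 := by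
    have hpow : (p:ℝ) ≤ (p:ℝ) ^ (1 + 2*s) := by
      have := Real.rpow_le_rpow_of_exponent_le hp1 (show (1:ℝ) ≤ 1 + 2*s by linarith)
      rwa [Real.rpow_one] at this
    have : (p:ℝ) * g ≤ (p:ℝ) ^ (1 + 2*s) * g := mul_le_mul_of_nonneg_right hpow hgpos
    exact div_le_div_of_nonneg_right this hL3s.le
  have hsqrtXY : Real.sqrt ((p:ℝ) * g / L3) ≤ Real.sqrt ((p:ℝ) ^ (1 + 2*s) * g / L3) :=
    Real.sqrt_le_sqrt hXY
  have hsplit : Real.sqrt ((p:ℝ) * g / L3) = Real.sqrt p * Real.sqrt (g / L3) := by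
    rw [mul_div_assoc, Real.sqrt_mul hp0]
  have hfrac : (0:ℝ) ≤ θ / L2 := by positivity
  calc C * Real.sqrt p ≤ (θ / L2 * Real.sqrt (g / L3)) * Real.sqrt p := by
        exact mul_le_mul_of_nonneg_right hkey (Real.sqrt_nonneg _)
    _ = θ / L2 * Real.sqrt ((p:ℝ) * g / L3) := by rw [hsplit]; ring
    _ ≤ θ / L2 * Real.sqrt ((p:ℝ) ^ (1 + 2*s) * g / L3) :=
        mul_le_mul_of_nonneg_left hsqrtXY hfrac
    _ = thr θ s p := by
        rw [thr, ← Real.sqrt_eq_rpow]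

lemma as_bound {Ω : Type*} [MeasureSpace Ω] [IsProbabilityMeasure (ℙ : Measure Ω)]
    (η : ℕ → Ω → ℝ) (hmeas : ∀ i, Measurable (η i))
    (hident : ∀ i, IdentDistrib (η i) (η 0) ℙ ℙ)
    (hvar : ∫ ω, (η 0 ω) ^ 2 ∂(ℙ : Measure Ω) = 1) :
    ∀ᵐ ω ∂(ℙ : Measure Ω), ∃ C : ℝ, 0 ≤ C ∧ ∀ k : ℕ, 2 ≤ k → |η k ω| ≤ C * Real.sqrt k := by
  have hint : Integrable (fun ω => (η 0 ω)^2) ℙ := by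
    by_contra h
    rw [integral_undef h] at hvar
    norm_num at hvar
  have hnonneg : 0 ≤ fun ω => (η 0 ω)^2 := fun ω => sq_nonneg _
  have hsum := ProbabilityTheory.tsum_prob_mem_Ioi_lt_top hint hnonneg
  set A : ℕ → Set Ω := fun k => {ω | (η k ω)^2 ∈ Set.Ioi (k:ℝ)} with hA
  have hAeq : ∀ k, ℙ (A k) = ℙ {ω | (η 0 ω)^2 ∈ Set.Ioi (k:ℝ)} := by
    intro k
    exact ((hident k).comp (measurable_id.pow_const 2)).measure_mem_eq measurableSet_Ioi
  have hne : (∑' k, ℙ (A k)) ≠ ⊤ := by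
    rw [tsum_congr hAeq]
    exact ne_of_lt hsum
  filter_upwards [MeasureTheory.ae_eventually_notMem hne] with ω hω
  obtain ⟨N, hN⟩ := eventually_atTop.mp hω
  refine ⟨1 + ∑ k ∈ Finset.range N, |η k ω|, by positivity, ?_⟩
  set C := 1 + ∑ k ∈ Finset.range N, |η k ω| with hCdef
  have hC1 : 1 ≤ C := by
    have : (0:ℝ) ≤ ∑ k ∈ Finset.range N, |η k ω| :=
      Finset.sum_nonneg fun i _ => abs_nonneg _
    linarith
  intro k hk2
  by_cases hkN : N ≤ k
  · have h := hN k hkN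
    have hsq : (η k ω)^2 ≤ (k:ℝ) := not_lt.mp h
    have habs : |η k ω| ≤ Real.sqrt k := Real.abs_le_sqrt hsq
    calc |η k ω| ≤ Real.sqrt k := habs
      _ ≤ C * Real.sqrt k := le_mul_of_one_le_left (Real.sqrt_nonneg _) hC1
  · push_neg at hkN
    have h1 : |η k ω| ≤ ∑ i ∈ Finset.range N, |η i ω| :=
      Finset.single_le_sum (f := fun i => |η i ω|) (fun i _ => abs_nonneg _)
        (Finset.mem_range.mpr hkN)
    have h2 : 1 ≤ Real.sqrt k := by
      rw [Real.one_le_sqrt]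
      exact_mod_cast le_trans one_le_two hk2
    calc |η k ω| ≤ C := by linarith
      _ ≤ C * Real.sqrt k := le_mul_of_one_le_right (by linarith) h2

/-- Lemma 3, relation (4.1): for every `θ > 0` and `M(s) → ∞`, almost surely
`∑_{p ≥ M(s)+1} |η_p| 1_{A_{p,θ}(s)} p^{-1/2-s} = 0` for all small `s > 0`;
in particular the sum tends to `0` a.s. as `s → 0+`. -/
theorem truncated_tail_sum_eventually_zero {Ω : Type*} [MeasureSpace Ω]
    [IsProbabilityMeasure (ℙ : Measure Ω)]
    (η : ℕ → Ω → ℝ) (hmeas : ∀ i, Measurable (η i))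
    (hindep : iIndepFun η ℙ)
    (hident : ∀ i, IdentDistrib (η i) (η 0) ℙ ℙ)
    (hmean : ∫ ω, η 0 ω ∂(ℙ : Measure Ω) = 0)
    (hvar : ∫ ω, (η 0 ω) ^ 2 ∂(ℙ : Measure Ω) = 1)
    (θ : ℝ) (hθ : 0 < θ)
    (M : ℝ → ℕ) (hM : Tendsto M (nhdsWithin 0 (Set.Ioi 0)) atTop) :
    ∀ᵐ ω ∂(ℙ : Measure Ω),
      (∀ᶠ s : ℝ in nhdsWithin 0 (Set.Ioi 0),
        (∑' p : Nat.Primes,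
          if M s + 1 ≤ (p : ℕ) ∧ thr θ s p < |η p ω| then
            |η p ω| * ((p : ℕ) : ℝ) ^ (-(1 / 2 + s))
          else 0) = 0) ∧
      Tendsto (fun s : ℝ =>
          ∑' p : Nat.Primes,
            if M s + 1 ≤ (p : ℕ) ∧ thr θ s p < |η p ω| then
              |η p ω| * ((p : ℕ) : ℝ) ^ (-(1 / 2 + s))
            else 0)
        (nhdsWithin 0 (Set.Ioi 0)) (nhds 0) := by
  filter_upwards [as_bound η hmeas hident hvar] with ω hCex
  obtain ⟨C, hC0, hCb⟩ := hCex
  have hE : ∀ᶠ s : ℝ in nhdsWithin 0 (Set.Ioi 0),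
      (∑' p : Nat.Primes,
        if M s + 1 ≤ (p : ℕ) ∧ thr θ s p < |η p ω| then
          |η p ω| * ((p : ℕ) : ℝ) ^ (-(1 / 2 + s))
        else 0) = 0 := by
    filter_upwards [eventually_thr θ C hθ hC0] with s hthr
    have hzero : ∀ p : Nat.Primes,
        (if M s + 1 ≤ (p : ℕ) ∧ thr θ s p < |η p ω| then
          |η p ω| * ((p : ℕ) : ℝ) ^ (-(1 / 2 + s))
        else 0) = 0 := by
      intro p
      apply if_neg
      rintro ⟨-, hlt⟩
      have hb := hCb p p.prop.two_le
      have ht := hthr p p.prop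
      exact absurd hlt (not_lt.mpr (hb.trans ht))
    calc (∑' p : Nat.Primes,
        if M s + 1 ≤ (p : ℕ) ∧ thr θ s p < |η p ω| then
          |η p ω| * ((p : ℕ) : ℝ) ^ (-(1 / 2 + s))
        else 0) = ∑' _ : Nat.Primes, (0:ℝ) := tsum_congr hzero
      _ = 0 := tsum_zero
  exact ⟨hE, Tendsto.congr' (hE.mono fun s hs => hs.symm) tendsto_const_nhds⟩
end

section
/- There is a constant C > 0 such that for all reals 0 < v' < v and all s' = e^{-1/v'}, s'' = e^{-1/v} with v, v' sufficiently small, ∑_{p prime} p^{-1} (p^{-e^{-1/v'}} - p^{-e^{-1/v}})² ≤ C (1/v' - 1/v). In particular, partitioning dyadically, for t_{j,m} = v_{n+1} + 2^{-j} m (v_n - v_{n+1}) one gets the bound C·2^{-j}(v_n - v_{n+1})/v_{n+1}². -/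
open Real Finset

namespace PrimeSumIncrementAux


noncomputable def Pz (c : ℝ) : ℝ := ∑' p : Nat.Primes, ((p : ℕ) : ℝ) ^ (-c)
noncomputable def Dz (c : ℝ) : ℝ :=
  ∑' p : Nat.Primes, Real.log ((p : ℕ) : ℝ) * ((p : ℕ) : ℝ) ^ (-c)

lemma two_le_p (p : Nat.Primes) : (2 : ℝ) ≤ ((p : ℕ) : ℝ) := by exact_mod_cast p.2.two_le
lemma p_pos (p : Nat.Primes) : (0 : ℝ) < ((p : ℕ) : ℝ) := lt_of_lt_of_le two_pos (two_le_p p)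
lemma one_le_p (p : Nat.Primes) : (1 : ℝ) ≤ ((p : ℕ) : ℝ) := by linarith [two_le_p p]
lemma logp_nonneg (p : Nat.Primes) : 0 ≤ Real.log ((p : ℕ) : ℝ) :=
  Real.log_nonneg (one_le_p p)

lemma summable_P {c : ℝ} (hc : 1 < c) :
    Summable (fun p : Nat.Primes => ((p : ℕ) : ℝ) ^ (-c)) := by
  have h : Summable (fun n : ℕ => (n : ℝ) ^ (-c)) :=
    Real.summable_nat_rpow.2 (by linarith)
  exact h.comp_injective Nat.Primes.coe_nat_injective

lemma summable_D {c : ℝ} (hc : 1 < c) :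
    Summable (fun p : Nat.Primes => Real.log ((p : ℕ) : ℝ) * ((p : ℕ) : ℝ) ^ (-c)) := by
  set t : ℝ := (c - 1) / 2 with ht
  have htpos : 0 < t := by simp only [ht]; linarith
  have h : Summable (fun p : Nat.Primes => (1 / t) * ((p : ℕ) : ℝ) ^ (-((c + 1) / 2))) :=
    (summable_P (by linarith : (1:ℝ) < (c + 1) / 2)).mul_left _
  refine Summable.of_nonneg_of_le (fun p => ?_) (fun p => ?_) h
  · have := logp_nonneg p
    have := (Real.rpow_nonneg (p_pos p).le (-c))
    positivity
  · have hP := p_pos p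
    have hlog : Real.log ((p : ℕ) : ℝ) ≤ (1 / t) * ((p : ℕ) : ℝ) ^ t := by
      have h1 : Real.log (((p : ℕ) : ℝ) ^ t) ≤ ((p : ℕ) : ℝ) ^ t - 1 :=
        Real.log_le_sub_one_of_pos (Real.rpow_pos_of_pos hP t)
      rw [Real.log_rpow hP] at h1
      have h2 : t * Real.log ((p : ℕ) : ℝ) ≤ ((p : ℕ) : ℝ) ^ t := by
        have := Real.rpow_pos_of_pos hP t; linarith
      calc Real.log ((p : ℕ) : ℝ) = (1 / t) * (t * Real.log ((p : ℕ) : ℝ)) := by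
            field_simp
        _ ≤ (1 / t) * ((p : ℕ) : ℝ) ^ t := by
            apply mul_le_mul_of_nonneg_left h2; positivity
    calc Real.log ((p : ℕ) : ℝ) * ((p : ℕ) : ℝ) ^ (-c)
        ≤ ((1 / t) * ((p : ℕ) : ℝ) ^ t) * ((p : ℕ) : ℝ) ^ (-c) := by
          apply mul_le_mul_of_nonneg_right hlog (Real.rpow_nonneg hP.le _)
      _ = (1 / t) * ((p : ℕ) : ℝ) ^ (-((c + 1) / 2)) := by
          rw [mul_assoc, ← Real.rpow_add hP]
          congr 2
          simp only [ht]; ring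

lemma Dz_nonneg {c : ℝ} : 0 ≤ Dz c :=
  tsum_nonneg fun p => mul_nonneg (logp_nonneg p) (Real.rpow_nonneg (p_pos p).le _)

lemma theta_le (n : ℕ) :
    ∑ q ∈ Finset.filter Nat.Prime (Finset.range (n + 1)), Real.log (q : ℝ)
      ≤ (n : ℝ) * Real.log 4 := by
  have h1 : ∑ q ∈ Finset.filter Nat.Prime (Finset.range (n + 1)), Real.log (q : ℝ)
      = Real.log ((primorial n : ℕ) : ℝ) := by
    rw [primorial, Nat.cast_prod, Real.log_prod]
    intro q hq
    have : q.Prime := (Finset.mem_filter.1 hq).2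
    exact_mod_cast this.pos.ne'
  rw [h1]
  have hpos : (0 : ℝ) < ((primorial n : ℕ) : ℝ) := by
    exact_mod_cast Nat.pos_of_ne_zero (by
      intro h
      have := primorial_pos n
      omega)
  calc Real.log ((primorial n : ℕ) : ℝ) ≤ Real.log (((4 ^ n : ℕ) : ℝ)) := by
        apply Real.log_le_log hpos
        exact_mod_cast primorial_le_4_pow n
    _ = (n : ℝ) * Real.log 4 := by
        push_cast
        rw [Real.log_pow]

lemma sum_D_le {c : ℝ} (hc1 : 1 < c) (hc2 : c ≤ 2) (u : Finset Nat.Primes) :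
    ∑ p ∈ u, Real.log ((p : ℕ) : ℝ) * ((p : ℕ) : ℝ) ^ (-c) ≤ 8 / (c - 1) := by
  classical
  set q : ℝ := (2 : ℝ) ^ (1 - c) with hq
  have hq0 : 0 < q := Real.rpow_pos_of_pos two_pos _
  have hq1 : q < 1 := Real.rpow_lt_one_of_one_lt_of_neg one_lt_two (by linarith)
  set K := (u.sup fun p => Nat.log 2 (p : ℕ)) + 1 with hK
  have hmap : ∀ p ∈ u, Nat.log 2 (p : ℕ) ∈ Finset.range K := by
    intro p hp
    have h : Nat.log 2 (p : ℕ) ≤ u.sup fun p : Nat.Primes => Nat.log 2 (p : ℕ) := by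
      exact Finset.le_sup (f := fun p : Nat.Primes => Nat.log 2 (p : ℕ)) hp
    rw [Finset.mem_range, hK]
    omega
  rw [← Finset.sum_fiberwise_of_maps_to hmap]
  have hfiber : ∀ k ∈ Finset.range K,
      (∑ p ∈ u.filter fun p : Nat.Primes => Nat.log 2 (p : ℕ) = k,
        Real.log ((p : ℕ) : ℝ) * ((p : ℕ) : ℝ) ^ (-c))
        ≤ (2 * Real.log 4) * q ^ k := by
    intro k _
    set F := u.filter fun p : Nat.Primes => Nat.log 2 (p : ℕ) = k with hF
    have step1 : (∑ p ∈ F, Real.log ((p : ℕ) : ℝ) * ((p : ℕ) : ℝ) ^ (-c))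
        ≤ (∑ p ∈ F, Real.log ((p : ℕ) : ℝ)) * ((2 : ℝ) ^ (k : ℕ)) ^ (-c) := by
      rw [Finset.sum_mul]
      apply Finset.sum_le_sum
      intro p hp
      have hk : Nat.log 2 (p : ℕ) = k := (Finset.mem_filter.1 hp).2
      have h2k : (2 : ℕ) ^ k ≤ (p : ℕ) := hk ▸ Nat.pow_log_le_self 2 p.2.pos.ne'
      have hcast : ((2 : ℝ) ^ (k : ℕ)) ≤ ((p : ℕ) : ℝ) := by exact_mod_cast h2k
      apply mul_le_mul_of_nonneg_left _ (logp_nonneg p)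
      exact Real.rpow_le_rpow_of_nonpos (by positivity) hcast (by linarith)
    have step2 : (∑ p ∈ F, Real.log ((p : ℕ) : ℝ))
        ≤ ((2 : ℝ) ^ (k + 1 : ℕ)) * Real.log 4 := by
      have hsub : F.image (fun p : Nat.Primes => (p : ℕ))
          ⊆ Finset.filter Nat.Prime (Finset.range (2 ^ (k + 1))) := by
        intro n hn
        obtain ⟨p, hp, rfl⟩ := Finset.mem_image.1 hn
        have hk : Nat.log 2 (p : ℕ) = k := (Finset.mem_filter.1 hp).2
        have hlt : (p : ℕ) < 2 ^ (k + 1) := hk ▸ Nat.lt_pow_succ_log_self one_lt_two _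
        exact Finset.mem_filter.2 ⟨Finset.mem_range.2 hlt, p.2⟩
      have him : (∑ p ∈ F, Real.log ((p : ℕ) : ℝ))
          = ∑ n ∈ F.image (fun p : Nat.Primes => (p : ℕ)), Real.log (n : ℝ) := by
        rw [Finset.sum_image]
        intro p _ r _ h
        exact Nat.Primes.coe_nat_injective h
      rw [him]
      have hstep : (∑ n ∈ F.image (fun p : Nat.Primes => (p : ℕ)), Real.log (n : ℝ))
          ≤ ∑ n ∈ Finset.filter Nat.Prime (Finset.range (2 ^ (k + 1))), Real.log (n : ℝ) := by
        apply Finset.sum_le_sum_of_subset_of_nonneg hsub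
        intro n hn _
        have : n.Prime := (Finset.mem_filter.1 hn).2
        exact Real.log_nonneg (by exact_mod_cast this.one_lt.le)
      refine hstep.trans ?_
      have h2 : (2 : ℕ) ^ (k + 1) = (2 ^ (k + 1) - 1) + 1 := by
        have : 0 < (2 : ℕ) ^ (k + 1) := Nat.pow_pos (by norm_num)
        omega
      rw [h2]
      refine (theta_le _).trans ?_
      apply mul_le_mul_of_nonneg_right _ (Real.log_nonneg (by norm_num))
      have : ((2 ^ (k + 1) - 1 : ℕ) : ℝ) ≤ ((2 ^ (k + 1) : ℕ) : ℝ) := by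
        exact_mod_cast Nat.sub_le _ _
      refine this.trans_eq ?_
      push_cast
      ring
    calc (∑ p ∈ F, Real.log ((p : ℕ) : ℝ) * ((p : ℕ) : ℝ) ^ (-c))
        ≤ (∑ p ∈ F, Real.log ((p : ℕ) : ℝ)) * ((2 : ℝ) ^ (k : ℕ)) ^ (-c) := step1
      _ ≤ (((2 : ℝ) ^ (k + 1 : ℕ)) * Real.log 4) * ((2 : ℝ) ^ (k : ℕ)) ^ (-c) := by
          apply mul_le_mul_of_nonneg_right step2 (Real.rpow_nonneg (by positivity) _)
      _ = (2 * Real.log 4) * q ^ k := by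
          have e1 : ((2 : ℝ) ^ (k + 1 : ℕ)) = (2 : ℝ) ^ ((k : ℝ) + 1) := by
            rw [← Real.rpow_natCast 2 (k + 1)]
            congr 1
            push_cast
            ring
          have e2 : ((2 : ℝ) ^ (k : ℕ)) ^ (-c) = (2 : ℝ) ^ ((k : ℝ) * (-c)) := by
            rw [← Real.rpow_natCast 2 k, ← Real.rpow_mul (by norm_num : (0:ℝ) ≤ 2)]
          have e3 : q ^ k = (2 : ℝ) ^ ((1 - c) * (k : ℝ)) := by
            rw [hq, ← Real.rpow_natCast ((2 : ℝ) ^ (1 - c)) k,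
              ← Real.rpow_mul (by norm_num : (0:ℝ) ≤ 2)]
          rw [e1, e2, e3,
            show ((2:ℝ) ^ ((k:ℝ) + 1) * Real.log 4) * (2:ℝ) ^ ((k:ℝ) * (-c))
              = ((2:ℝ) ^ ((k:ℝ) + 1) * (2:ℝ) ^ ((k:ℝ) * (-c))) * Real.log 4 from by ring,
            ← Real.rpow_add two_pos,
            show (k:ℝ) + 1 + (k:ℝ) * (-c) = 1 + (1 - c) * (k:ℝ) from by ring,
            Real.rpow_add two_pos, Real.rpow_one]
          ring
  have hsum := Finset.sum_le_sum hfiber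
  refine hsum.trans ?_
  rw [← Finset.mul_sum]
  have hgeo : (∑ k ∈ Finset.range K, q ^ k) ≤ 1 / (1 - q) := by
    have h1q : 0 < 1 - q := by linarith
    rw [le_div_iff₀ h1q]
    have := geom_sum_mul q K
    have hqK : (0:ℝ) ≤ q ^ K := by positivity
    nlinarith [this]
  have hlog2 : (0.6931471803 : ℝ) < Real.log 2 := Real.log_two_gt_d9
  have hlog2' : Real.log 2 < 0.6931471808 := Real.log_two_lt_d9
  have hq_exp : q = Real.exp (-((c - 1) * Real.log 2)) := by
    rw [hq, Real.rpow_def_of_pos two_pos]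
    congr 1
    ring
  have hx : 0 < (c - 1) * Real.log 2 := by nlinarith
  have hx1 : (c - 1) * Real.log 2 ≤ Real.log 2 := by nlinarith
  have hbound : (c - 1) * Real.log 2 / 2 ≤ 1 - q := by
    set x := (c - 1) * Real.log 2 with hxdef
    have h1 : x * Real.exp (-x) ≤ 1 - Real.exp (-x) := by
      have := Real.add_one_le_exp x
      have hex : 0 < Real.exp (-x) := Real.exp_pos _
      have hxx : (x + 1) * Real.exp (-x) ≤ Real.exp x * Real.exp (-x) :=
        mul_le_mul_of_nonneg_right this hex.le
      rw [← Real.exp_add] at hxx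
      simp at hxx
      nlinarith
    have h2 : Real.exp (-Real.log 2) ≤ Real.exp (-x) := Real.exp_le_exp.2 (by linarith)
    have h3 : Real.exp (-Real.log 2) = 1 / 2 := by
      rw [Real.exp_neg, Real.exp_log two_pos]; norm_num
    rw [hq_exp]
    nlinarith [Real.exp_pos (-x)]
  have hfin : (2 * Real.log 4) * (1 / (1 - q)) ≤ 8 / (c - 1) := by
    have hlog4 : Real.log 4 = 2 * Real.log 2 := by
      rw [show (4:ℝ) = 2 ^ (2:ℕ) from by norm_num, Real.log_pow]
      push_cast; ring
    have h1q : 0 < 1 - q := by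
      have := hbound; nlinarith
    rw [hlog4, le_div_iff₀ (by linarith : (0:ℝ) < c - 1),
      show 2 * (2 * Real.log 2) * (1 / (1 - q)) * (c - 1)
        = (4 * Real.log 2 * (c - 1)) * (1 - q)⁻¹ from by ring,
      ← div_eq_mul_inv, div_le_iff₀ h1q]
    nlinarith
  calc (2 * Real.log 4) * (∑ k ∈ Finset.range K, q ^ k)
      ≤ (2 * Real.log 4) * (1 / (1 - q)) := by
        apply mul_le_mul_of_nonneg_left hgeo
        have : (0:ℝ) < Real.log 4 := Real.log_pos (by norm_num)
        positivity
    _ ≤ 8 / (c - 1) := hfin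

lemma Dz_le {c : ℝ} (hc1 : 1 < c) (hc2 : c ≤ 2) : Dz c ≤ 8 / (c - 1) :=
  Summable.tsum_le_of_sum_le (summable_D hc1) (sum_D_le hc1 hc2)

lemma Pz_anti {c₁ c₂ : ℝ} (h1 : 1 < c₁) (h12 : c₁ ≤ c₂) : Pz c₂ ≤ Pz c₁ :=
  Summable.tsum_le_tsum
    (fun p => Real.rpow_le_rpow_of_exponent_le (one_le_p p) (neg_le_neg h12))
    (summable_P (lt_of_lt_of_le h1 h12)) (summable_P h1)

lemma one_sub_rpow_le {P d : ℝ} (hP : 1 ≤ P) (hd : 0 ≤ d) :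
    1 - P ^ (-d) ≤ d * Real.log P := by
  have hP0 : (0 : ℝ) < P := by linarith
  rw [Real.rpow_def_of_pos hP0]
  have := Real.add_one_le_exp (Real.log P * -d)
  nlinarith [Real.exp_pos (Real.log P * -d)]

lemma Pz_diff_le {c₁ c₂ : ℝ} (h1 : 1 < c₁) (h12 : c₁ ≤ c₂) :
    Pz c₁ - Pz c₂ ≤ (c₂ - c₁) * Dz c₁ := by
  have hs1 := summable_P h1
  have hs2 := summable_P (lt_of_lt_of_le h1 h12)
  have hsD := (summable_D h1).mul_left (c₂ - c₁)
  rw [Pz, Pz, ← Summable.tsum_sub hs1 hs2, Dz, ← tsum_mul_left]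
  refine Summable.tsum_le_tsum (fun p => ?_) (hs1.sub hs2) hsD
  have hP0 := p_pos p
  have hP1 := one_le_p p
  have hd : (0:ℝ) ≤ c₂ - c₁ := by linarith
  have hsplit : ((p : ℕ) : ℝ) ^ (-c₂)
      = ((p : ℕ) : ℝ) ^ (-c₁) * ((p : ℕ) : ℝ) ^ (-(c₂ - c₁)) := by
    rw [← Real.rpow_add hP0]
    congr 1
    ring
  have h2 := one_sub_rpow_le hP1 hd
  have hrp := Real.rpow_nonneg hP0.le (-c₁)
  calc ((p : ℕ) : ℝ) ^ (-c₁) - ((p : ℕ) : ℝ) ^ (-c₂)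
      = ((p : ℕ) : ℝ) ^ (-c₁) * (1 - ((p : ℕ) : ℝ) ^ (-(c₂ - c₁))) := by
        rw [hsplit]; ring
    _ ≤ ((p : ℕ) : ℝ) ^ (-c₁) * ((c₂ - c₁) * Real.log ((p : ℕ) : ℝ)) :=
        mul_le_mul_of_nonneg_left h2 hrp
    _ = (c₂ - c₁) * (Real.log ((p : ℕ) : ℝ) * ((p : ℕ) : ℝ) ^ (-c₁)) := by ring

lemma telescope : ∀ (k : ℕ) (σ : ℝ), 0 < σ → (2:ℝ) ^ k * σ ≤ 1 →
    Pz (1 + σ) - Pz (1 + (2:ℝ) ^ k * σ) ≤ 8 * k := by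
  intro k
  induction k with
  | zero => intro σ h1 h2; simp
  | succ n ih =>
    intro σ hσ h2
    have h2n : (1:ℝ) ≤ (2:ℝ) ^ n := one_le_pow₀ (by norm_num)
    have hσ1 : σ ≤ 1 / 2 := by
      have : (2:ℝ) ^ (n+1) * σ = 2 * ((2:ℝ) ^ n * σ) := by ring
      nlinarith
    have step : Pz (1 + σ) - Pz (1 + 2 * σ) ≤ 8 := by
      have hdiff := Pz_diff_le (by linarith : (1:ℝ) < 1 + σ)
        (by linarith : 1 + σ ≤ 1 + 2 * σ)
      have hD := Dz_le (by linarith : (1:ℝ) < 1 + σ) (by linarith : 1 + σ ≤ 2)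
      have he : (1 + 2 * σ - (1 + σ)) = σ := by ring
      rw [he] at hdiff
      have h8 : (8:ℝ) / (1 + σ - 1) = 8 / σ := by norm_num
      rw [h8] at hD
      calc Pz (1 + σ) - Pz (1 + 2 * σ) ≤ σ * Dz (1 + σ) := hdiff
        _ ≤ σ * (8 / σ) := mul_le_mul_of_nonneg_left hD hσ.le
        _ = 8 := by field_simp
    have ihh := ih (2 * σ) (by linarith)
      (by rw [show (2:ℝ) ^ n * (2 * σ) = (2:ℝ) ^ (n+1) * σ from by ring]; exact h2)
    have hrw : (1:ℝ) + (2:ℝ) ^ (n+1) * σ = 1 + (2:ℝ) ^ n * (2 * σ) := by ring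
    rw [hrw]
    push_cast
    linarith


end PrimeSumIncrementAux

open PrimeSumIncrementAux in
/-- There is a constant `C > 0` such that for all sufficiently small `0 < v' < v`,
`∑_p p^{-1} (p^{-e^{-1/v'}} - p^{-e^{-1/v}})² ≤ C (1/v' - 1/v)` (sum over primes). -/
theorem prime_sum_increment_bound :
    ∃ C : ℝ, 0 < C ∧ ∃ ε : ℝ, 0 < ε ∧ ∀ v v' : ℝ, 0 < v' → v' < v → v < ε →
      (∑' p : Nat.Primes, ((p : ℕ) : ℝ)⁻¹ *
          (((p : ℕ) : ℝ) ^ (-Real.exp (-1 / v')) - ((p : ℕ) : ℝ) ^ (-Real.exp (-1 / v))) ^ 2) ≤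
        C * (1 / v' - 1 / v) := by
  refine ⟨24, by norm_num, 1/10, by norm_num, ?_⟩
  intro v v' hv' hlt hvs
  have hv : 0 < v := hv'.trans hlt
  set a : ℝ := Real.exp (-1 / v') with hadef
  set b : ℝ := Real.exp (-1 / v) with hbdef
  have ha : 0 < a := Real.exp_pos _
  have hb : 0 < b := Real.exp_pos _
  have hinv : 1 / v < 1 / v' := one_div_lt_one_div_of_lt hv' hlt
  have hab : a < b := by
    rw [hadef, hbdef]
    apply Real.exp_lt_exp.2
    rw [neg_div, neg_div]
    linarith
  set G : ℝ := 1 / v' - 1 / v with hGdef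
  have hGpos : 0 < G := by rw [hGdef]; linarith
  have hebG : Real.exp G = b / a := by
    rw [hGdef, hadef, hbdef, ← Real.exp_sub]
    congr 1
    field_simp
    ring
  have hba : b = a * Real.exp G := by
    rw [hebG]; field_simp
  have hbound : b ≤ 1 / 11 := by
    have h10 : (10:ℝ) < 1 / v := by
      rw [lt_div_iff₀ hv]; nlinarith
    have : b ≤ Real.exp (-10) := by
      rw [hbdef]
      apply Real.exp_le_exp.2
      rw [neg_div]
      linarith
    refine this.trans ?_
    rw [Real.exp_neg,
      inv_le_comm₀ (Real.exp_pos _) (by norm_num : (0:ℝ) < 1/11),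
      show ((1:ℝ)/11)⁻¹ = 11 from by norm_num]
    calc (11:ℝ) = 10 + 1 := by norm_num
      _ ≤ Real.exp 10 := Real.add_one_le_exp 10
  -- reduction to Pz difference
  have hc1 : (1:ℝ) < 1 + 2 * a := by linarith
  have hc2 : (1:ℝ) < 1 + (a + b) := by linarith
  have hfg : ∀ p : Nat.Primes,
      ((p : ℕ) : ℝ)⁻¹ * (((p : ℕ) : ℝ) ^ (-a) - ((p : ℕ) : ℝ) ^ (-b)) ^ 2
        ≤ ((p : ℕ) : ℝ) ^ (-(1 + 2 * a)) - ((p : ℕ) : ℝ) ^ (-(1 + (a + b))) := by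
    intro p
    have hP0 := p_pos p
    have hP1 := one_le_p p
    set x := ((p : ℕ) : ℝ) ^ (-a) with hx
    set y := ((p : ℕ) : ℝ) ^ (-b) with hy
    have hyx : y ≤ x := Real.rpow_le_rpow_of_exponent_le hP1 (by linarith)
    have hy0 : 0 ≤ y := Real.rpow_nonneg hP0.le _
    have hsq : (x - y) ^ 2 ≤ x * x - x * y := by nlinarith
    have hinv : ((p : ℕ) : ℝ)⁻¹ = ((p : ℕ) : ℝ) ^ (-(1:ℝ)) := (Real.rpow_neg_one _).symm
    have e1 : ((p : ℕ) : ℝ) ^ (-(1:ℝ)) * (x * x) = ((p : ℕ) : ℝ) ^ (-(1 + 2 * a)) := by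
      rw [hx, ← Real.rpow_add hP0, ← Real.rpow_add hP0]
      congr 1
      ring
    have e2 : ((p : ℕ) : ℝ) ^ (-(1:ℝ)) * (x * y) = ((p : ℕ) : ℝ) ^ (-(1 + (a + b))) := by
      rw [hx, hy, ← Real.rpow_add hP0, ← Real.rpow_add hP0]
      congr 1
      ring
    calc ((p : ℕ) : ℝ)⁻¹ * (x - y) ^ 2
        ≤ ((p : ℕ) : ℝ)⁻¹ * (x * x - x * y) := by
          apply mul_le_mul_of_nonneg_left hsq (by positivity)
      _ = ((p : ℕ) : ℝ) ^ (-(1:ℝ)) * (x * x) - ((p : ℕ) : ℝ) ^ (-(1:ℝ)) * (x * y) := by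
          rw [hinv]; ring
      _ = ((p : ℕ) : ℝ) ^ (-(1 + 2 * a)) - ((p : ℕ) : ℝ) ^ (-(1 + (a + b))) := by
          rw [e1, e2]
  have hs1 := summable_P hc1
  have hs2 := summable_P hc2
  have hgsum : Summable (fun p : Nat.Primes =>
      ((p : ℕ) : ℝ) ^ (-(1 + 2 * a)) - ((p : ℕ) : ℝ) ^ (-(1 + (a + b)))) := hs1.sub hs2
  have hfsum : Summable (fun p : Nat.Primes =>
      ((p : ℕ) : ℝ)⁻¹ *
        (((p : ℕ) : ℝ) ^ (-a) - ((p : ℕ) : ℝ) ^ (-b)) ^ 2) := by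
    refine Summable.of_nonneg_of_le (fun p => by positivity) (fun p => ?_) hs1
    refine (hfg p).trans ?_
    have : 0 ≤ ((p : ℕ) : ℝ) ^ (-(1 + (a + b))) := Real.rpow_nonneg (p_pos p).le _
    linarith
  have key : (∑' p : Nat.Primes, ((p : ℕ) : ℝ)⁻¹ *
      (((p : ℕ) : ℝ) ^ (-a) - ((p : ℕ) : ℝ) ^ (-b)) ^ 2)
        ≤ Pz (1 + 2 * a) - Pz (1 + (a + b)) := by
    rw [Pz, Pz, ← Summable.tsum_sub hs1 hs2]
    exact Summable.tsum_le_tsum hfg hfsum hgsum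
  refine key.trans ?_
  -- case analysis
  rcases le_or_gt b (2 * a) with hcase | hcase
  · -- b ≤ 2a
    have hdiff := Pz_diff_le hc1 (by linarith : 1 + 2 * a ≤ 1 + (a + b))
    have hD : Dz (1 + 2 * a) ≤ 8 / (2 * a) := by
      have := Dz_le hc1 (by linarith : 1 + 2 * a ≤ 2)
      rwa [show (1 + 2 * a - 1) = 2 * a from by ring] at this
    have hba' : b - a ≤ b * G := by
      have hexp : 1 - Real.exp (-G) ≤ G := by
        have := Real.add_one_le_exp (-G); linarith
      have haeq : a = b * Real.exp (-G) := by
        rw [hba, Real.exp_neg]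
        field_simp
      nlinarith [Real.exp_pos (-G), hb]
    have he : (1 + (a + b) - (1 + 2 * a)) = b - a := by ring
    rw [he] at hdiff
    refine hdiff.trans ?_
    calc (b - a) * Dz (1 + 2 * a) ≤ (b - a) * (8 / (2 * a)) :=
          mul_le_mul_of_nonneg_left hD (by linarith)
      _ ≤ (b * G) * (8 / (2 * a)) :=
          mul_le_mul_of_nonneg_right hba' (by positivity)
      _ ≤ 24 * G := by
          rw [show (b * G) * (8 / (2 * a)) = (8 * b / (2 * a)) * G from by ring]
          apply mul_le_mul_of_nonneg_right _ hGpos.le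
          rw [div_le_iff₀ (by linarith : (0:ℝ) < 2 * a)]
          linarith
  · -- 2a < b
    have hlog2 : (0.6931471803 : ℝ) < Real.log 2 := Real.log_two_gt_d9
    have hlog2pos : (0:ℝ) < Real.log 2 := by linarith
    have hGgt : Real.log 2 < G := by
      have h2ab : (2:ℝ) < b / a := by
        rw [lt_div_iff₀ ha]; linarith
      have := hebG
      have : Real.exp (Real.log 2) < Real.exp G := by
        rw [Real.exp_log two_pos, hebG]; exact h2ab
      exact Real.exp_lt_exp.1 this
    set x : ℝ := G / Real.log 2 with hxdef
    have hx1 : 1 < x := by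
      rw [hxdef, lt_div_iff₀ hlog2pos]; linarith
    set k : ℕ := ⌈x⌉₊ with hkdef
    have hk1 : x ≤ (k : ℝ) := Nat.le_ceil x
    have hk2 : (k : ℝ) < x + 1 := Nat.ceil_lt_add_one (by linarith)
    have h2k : (2:ℝ) ^ k = Real.exp ((k : ℝ) * Real.log 2) := by
      rw [← Real.rpow_natCast 2 k, Real.rpow_def_of_pos two_pos]
      ring_nf
    have hxlog : x * Real.log 2 = G := by
      rw [hxdef]; field_simp
    have h2k_ge : b ≤ (2:ℝ) ^ k * a := by
      have hEG : Real.exp G ≤ (2:ℝ) ^ k := by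
        rw [h2k]
        apply Real.exp_le_exp.2
        have := mul_le_mul_of_nonneg_right hk1 hlog2pos.le
        linarith [hxlog]
      calc b = a * Real.exp G := hba
        _ ≤ a * (2:ℝ) ^ k := mul_le_mul_of_nonneg_left hEG ha.le
        _ = (2:ℝ) ^ k * a := by ring
    have h2k_le : (2:ℝ) ^ k * (2 * a) ≤ 1 := by
      have hk2' : (2:ℝ) ^ k ≤ Real.exp ((x + 1) * Real.log 2) := by
        rw [h2k]
        apply Real.exp_le_exp.2
        exact mul_le_mul_of_nonneg_right hk2.le hlog2pos.le
      have : Real.exp ((x + 1) * Real.log 2) = 2 * (b / a) := by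
        rw [show (x + 1) * Real.log 2 = x * Real.log 2 + Real.log 2 from by ring,
          Real.exp_add, hxlog, hebG, Real.exp_log two_pos]
        ring
      rw [this] at hk2'
      have h4b : (2:ℝ) ^ k * (2 * a) ≤ 4 * b := by
        have := mul_le_mul_of_nonneg_right hk2' (by linarith : (0:ℝ) ≤ 2 * a)
        calc (2:ℝ) ^ k * (2 * a) ≤ 2 * (b / a) * (2 * a) := this
          _ = 4 * b := by field_simp; ring
      linarith
    have hanti : Pz (1 + (2:ℝ) ^ k * (2 * a)) ≤ Pz (1 + (a + b)) := by
      apply Pz_anti hc2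
      have hab2 : a + b ≤ 2 * b := by linarith
      have h2b : 2 * b ≤ 2 * ((2:ℝ) ^ k * a) := by linarith [h2k_ge]
      have heq : (2:ℝ) ^ k * (2 * a) = 2 * ((2:ℝ) ^ k * a) := by ring
      linarith
    have htel := telescope k (2 * a) (by linarith) h2k_le
    have hfin : Pz (1 + 2 * a) - Pz (1 + (a + b)) ≤ 8 * k := by
      have : Pz (1 + 2 * a) - Pz (1 + (a + b))
          ≤ Pz (1 + (2:ℝ) * a) - Pz (1 + (2:ℝ) ^ k * (2 * a)) := by
        have h2a : (1:ℝ) + 2 * a = 1 + (2:ℝ) * a := by ring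
        linarith [hanti]
      refine this.trans ?_
      have h2a2 : (1:ℝ) + (2:ℝ) * a = 1 + (2 * a) := by ring
      rw [h2a2]
      exact htel
    refine hfin.trans ?_
    -- 8k ≤ 24 G
    have : (k:ℝ) < 2 * x := by linarith
    have h16 : 8 * (k:ℝ) ≤ 16 * x := by linarith
    refine h16.trans ?_
    calc 16 * x = (16 / Real.log 2) * G := by rw [hxdef]; ring
      _ ≤ 24 * G := by
          apply mul_le_mul_of_nonneg_right _ hGpos.le
          rw [div_le_iff₀ hlog2pos]
          linarith
end
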